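/- arXiv:1404.0843 — 7 statements merged into one kernel-verified Lean document; each statement's English description precedes it below -/
import Mathlib

section
/- There exists a cycle property Y that is closed under cyclic permutations and a first cycle game with winning condition Y that is not pointwise memoryless determined for Player 0: Player 0 has a winning strategy from some vertex but no memoryless winning strategy from that vertex. -/
structure Arena (U : Type) where
  V : Type
  finV : Fintype V
  decV : DecidableEq V
  owner : V → Fin 2
  E : V → V → Prop
  nodead : ∀ v, ∃ w, E v w
  lab : V → V → U

namespace Arena

variable {U : Type} (A : Arena U)

instance : DecidableEq A.V := A.decV
instance : Fintype A.V := A.finV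

/-- An infinite play: consecutive vertices are connected by edges. -/
def IsPlay (π : ℕ → A.V) : Prop := ∀ j, A.E (π j) (π (j + 1))

/-- A strategy: given the history (past vertices, in order) and the current
vertex, produce the next vertex. -/
abbrev Strategy := List A.V → A.V → A.V

def Legal (S : A.Strategy) : Prop := ∀ h v, A.E v (S h v)

def Memoryless (S : A.Strategy) : Prop := ∀ h h' v, S h v = S h' v

/-- The history of a play: the first `j` vertices. -/
def hist (π : ℕ → A.V) (j : ℕ) : List A.V := (List.range j).map π

/-- A play is consistent with a strategy of player `i`. -/
def Consistent (i : Fin 2) (S : A.Strategy) (π : ℕ → A.V) : Prop :=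
  ∀ j, A.owner (π j) = i → π (j + 1) = S (A.hist π j) (π j)

/-- One step of the stack-based cycles-decomposition algorithm.  The stack is
a list of vertices (a simple path).  Pushing vertex `v`: if `v` already occurs
on the stack, the cycle from (the first occurrence of) `v` to the top is popped
and output (represented by its list of vertices, starting with `v`, with an
implicit closing edge back to `v`); otherwise `v` is pushed. -/
def step (s : List A.V) (v : A.V) : List A.V × Option (List A.V) :=
  if v ∈ s then (s.take (s.idxOf v + 1), some (s.drop (s.idxOf v)))
  else (s ++ [v], none)

/-- The stack after processing vertices `π 0, …, π n`. -/
def stackAt (π : ℕ → A.V) : ℕ → List A.V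
  | 0 => [π 0]
  | n + 1 => (A.step (stackAt π n) (π (n + 1))).1

/-- The cycle (if any) output while processing vertex `π (n+1)`. -/
def cycleAt (π : ℕ → A.V) (n : ℕ) : Option (List A.V) :=
  (A.step (A.stackAt π n) (π (n + 1))).2

/-- The labels of the edges of a cycle `[v, w₁, …, w_k]`, i.e. of the edges
`(v,w₁)(w₁,w₂)…(w_k,v)`. -/
def cycLabels : List A.V → List U
  | [] => []
  | v :: rest => List.zipWith A.lab (v :: rest) (rest ++ [v])

def Objective := (ℕ → A.V) → Prop

/-- First-cycle objective: the first cycle output by the decomposition has its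
labels in `Y`. -/
def FCObj (Y : Set (List U)) : A.Objective := fun π =>
  ∃ n c, A.cycleAt π n = some c ∧ (∀ m, m < n → A.cycleAt π m = none) ∧
    A.cycLabels c ∈ Y

/-- All-cycles objective: every cycle of the decomposition has labels in `Y`. -/
def ACObj (Y : Set (List U)) : A.Objective := fun π =>
  ∀ n c, A.cycleAt π n = some c → A.cycLabels c ∈ Y

def shift (π : ℕ → A.V) (k : ℕ) : ℕ → A.V := fun n => π (n + k)

/-- Suffix all-cycles objective: some suffix of the play has all cycles of its
decomposition with labels in `Y`. -/
def EACObj (Y : Set (List U)) : A.Objective := fun π =>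
  ∃ k, A.ACObj Y (A.shift π k)

/-- The objective induced by a winning condition `W ⊆ U^ω`. -/
def WObj (W : Set (ℕ → U)) : A.Objective := fun π =>
  (fun j => A.lab (π j) (π (j + 1))) ∈ W

/-- `S` is a winning strategy for player `i` from `v` for objective `O`. -/
def WinsFrom (O : A.Objective) (i : Fin 2) (S : A.Strategy) (v : A.V) : Prop :=
  A.Legal S ∧ ∀ π, A.IsPlay π → π 0 = v → A.Consistent i S π →
    (if i = 0 then O π else ¬ O π)

def WinRegion (O : A.Objective) (i : Fin 2) : Set A.V :=
  { v | ∃ S, A.WinsFrom O i S v }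

def PointwiseMemoryless (O : A.Objective) (i : Fin 2) : Prop :=
  ∀ v ∈ A.WinRegion O i, ∃ S, A.Memoryless S ∧ A.WinsFrom O i S v

def UniformMemoryless (O : A.Objective) (i : Fin 2) : Prop :=
  ∃ S, A.Memoryless S ∧ ∀ v ∈ A.WinRegion O i, A.WinsFrom O i S v

def Determined (O : A.Objective) : Prop :=
  ∀ v, v ∈ A.WinRegion O 0 ∨ v ∈ A.WinRegion O 1

def PointwiseMemDet (O : A.Objective) : Prop :=
  A.Determined O ∧ A.PointwiseMemoryless O 0 ∧ A.PointwiseMemoryless O 1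

def UniformMemDet (O : A.Objective) : Prop :=
  A.Determined O ∧ A.UniformMemoryless O 0 ∧ A.UniformMemoryless O 1

/-- The game `(A, O)` is `Y`-greedy. -/
def YGreedy (Y : Set (List U)) (O : A.Objective) : Prop :=
  (∀ π, A.IsPlay π → A.ACObj Y π → O π) ∧
  (∀ π, A.IsPlay π → A.ACObj Yᶜ π → ¬ O π)

/-- The arena `A` is `Y`-unambiguous. -/
def Unambiguous (Y : Set (List U)) : Prop :=
  ∀ π, A.IsPlay π → ¬ (A.EACObj Y π ∧ A.EACObj Yᶜ π)

/-- All vertices belong to player `i`. -/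
def SolitaireFor (i : Fin 2) : Prop := ∀ v, A.owner v = i

end Arena

/-- A cycle property is closed under cyclic permutations. -/
def ClosedCyc {U : Type} (Y : Set (List U)) : Prop :=
  ∀ (a : U) (b : List U), (a :: b) ∈ Y → (b ++ [a]) ∈ Y

/-- A cycle property is closed under concatenation. -/
def ClosedConcat {U : Type} (Y : Set (List U)) : Prop :=
  ∀ a b, a ∈ Y → b ∈ Y → (a ++ b) ∈ Y

/-- A Moore machine generating a strategy on arena `A`. -/
structure Moore {U : Type} (A : Arena U) where
  M : Type
  finM : Fintype M
  m0 : M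
  upd : A.V → M → M
  out : A.V → M → A.V

namespace Moore

variable {U : Type} {A : Arena U}

def card (Mm : Moore A) : ℕ := @Fintype.card Mm.M Mm.finM

/-- Memory state reached after reading a history. -/
def run (Mm : Moore A) (h : List A.V) : Mm.M :=
  h.foldl (fun m x => Mm.upd x m) Mm.m0

/-- The Moore machine generates strategy `S`. -/
def Generates (Mm : Moore A) (S : A.Strategy) : Prop :=
  ∀ h x, S h x = Mm.out x (Mm.run h)

end Moore

/-! ### Auxiliary construction for `stmt0` -/

/-- The witness arena: vertices `0,1,2,3` (for `v1,v2,v3,v4`). -/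
abbrev Ar : Arena ℕ where
  V := Fin 4
  finV := inferInstance
  decV := inferInstance
  owner := fun v => if v = 0 then 0 else 1
  E := fun v w => (v.val, w.val) ∈ [(0,1),(1,0),(0,2),(2,1),(1,3),(3,0)]
  nodead := by decide
  lab := fun _ _ => 0

/-- The winning (history-dependent) strategy for Player 0 from vertex `1`. -/
def Swin : List (Fin 4) → Fin 4 → Fin 4 := fun h v =>
  if v = 0 then (if h = [1] then 1 else 2)
  else if v = 1 then 0 else if v = 2 then 1 else 0

def Ywit : Set (List ℕ) := {l | Even l.length}

lemma edge1 : ∀ w : Fin 4, Ar.E 1 w → w = 0 ∨ w = 3 := by decide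
lemma edge3 : ∀ w : Fin 4, Ar.E 3 w → w = 0 := by decide
lemma edge2 : ∀ w : Fin 4, Ar.E 2 w → w = 1 := by decide
lemma edge0 : ∀ w : Fin 4, Ar.E 0 w → w = 1 ∨ w = 2 := by decide

lemma Swin_legal : Ar.Legal Swin := by
  intro h v
  by_cases hh : h = [1]
  · subst hh; revert v; decide
  · simp only [Swin, if_neg hh]; revert v; decide

/-- The play 1,3,0,1,3,0,… -/
def piA : ℕ → Fin 4 := fun n => if n % 3 = 0 then 1 else if n % 3 = 1 then 3 else 0

/-- The play 1,0,2,1,0,2,… -/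
def piB : ℕ → Fin 4 := fun n => if n % 3 = 0 then 1 else if n % 3 = 1 then 0 else 2

lemma piA_play : Ar.IsPlay piA := by
  intro j
  have h : j % 3 = 0 ∨ j % 3 = 1 ∨ j % 3 = 2 := by omega
  rcases h with h | h | h
  · have h' : (j + 1) % 3 = 1 := by omega
    simp only [piA, h, h']
    decide
  · have h' : (j + 1) % 3 = 2 := by omega
    simp only [piA, h, h']
    decide
  · have h' : (j + 1) % 3 = 0 := by omega
    simp only [piA, h, h']
    decide

lemma piB_play : Ar.IsPlay piB := by
  intro j
  have h : j % 3 = 0 ∨ j % 3 = 1 ∨ j % 3 = 2 := by omega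
  rcases h with h | h | h
  · have h' : (j + 1) % 3 = 1 := by omega
    simp only [piB, h, h']
    decide
  · have h' : (j + 1) % 3 = 2 := by omega
    simp only [piB, h, h']
    decide
  · have h' : (j + 1) % 3 = 0 := by omega
    simp only [piB, h, h']
    decide


/-- there is a cycle property closed under cyclic permutations
whose first cycle game is not pointwise memoryless for Player 0. -/
theorem stmt0 :
    ∃ (Y : Set (List ℕ)), ClosedCyc Y ∧
      ∃ (A : Arena ℕ) (v : A.V),
        (∃ S, A.WinsFrom (A.FCObj Y) 0 S v) ∧
        ¬ ∃ S, A.Memoryless S ∧ A.WinsFrom (A.FCObj Y) 0 S v := by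
  refine ⟨Ywit, ?_, Ar, (1 : Fin 4), ⟨Swin, Swin_legal, ?_⟩, ?_⟩
  · intro a b hab
    simpa [Ywit, Nat.even_add_one, Nat.even_add_one] using hab
  · -- Swin wins from 1
    intro π hplay h0 hcons
    rw [if_pos rfl]
    have h1 := edge1 _ (h0 ▸ hplay 0)
    rcases h1 with h1 | h1
    · -- π = 1,0,1,...
      have hh : Ar.hist π 1 = [1] := by
        simp [Arena.hist, List.range_succ, h0]
      have h2 : π 2 = 1 := by
        have := hcons 1 (by simp [h1, Ar, Arena.owner])
        rw [this, h1, hh]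
        rfl
      refine ⟨1, [1, 0], ?_, ?_, ?_⟩
      · simp [Arena.cycleAt, Arena.stackAt, Arena.step, h0, h1, h2]
      · intro m hm
        interval_cases m
        simp [Arena.cycleAt, Arena.stackAt, Arena.step, h0, h1]
      · simp [Arena.cycLabels, Ywit]
    · -- π = 1,3,0,2,1,...
      have h2 : π 2 = 0 := edge3 _ (h1 ▸ hplay 1)
      have hh2 : Ar.hist π 2 = [1, 3] := by
        simp [Arena.hist, List.range_succ, h0, h1]
      have h3 : π 3 = 2 := by
        have := hcons 2 (by simp [h2, Arena.owner])
        rw [this, h2, hh2]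
        rfl
      have h4 : π 4 = 1 := edge2 _ (h3 ▸ hplay 3)
      refine ⟨3, [1, 3, 0, 2], ?_, ?_, ?_⟩
      · simp [Arena.cycleAt, Arena.stackAt, Arena.step, h0, h1, h2, h3, h4]
      · intro m hm
        interval_cases m <;>
          simp [Arena.cycleAt, Arena.stackAt, Arena.step, h0, h1, h2, h3]
      · simp only [Arena.cycLabels, Ywit, Set.mem_setOf_eq]
        decide
  · -- no memoryless winning strategy
    rintro ⟨S, hmem, hleg, hwin⟩
    rcases edge0 _ (hleg [] 0) with hS | hS
    · -- memoryless choice `0 ↦ 1`: Player 1 forces the odd cycle 1,3,0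
      have hcons : Ar.Consistent 0 S piA := by
        intro j hj
        have h2 : j % 3 = 2 := by
          by_contra hne
          have h : j % 3 = 0 ∨ j % 3 = 1 := by omega
          rcases h with h | h
          · rw [show piA j = 1 by simp [piA, h]] at hj
            exact absurd hj (by decide)
          · rw [show piA j = 3 by simp [piA, h]] at hj
            exact absurd hj (by decide)
        have hj0 : piA j = 0 := by simp [piA, h2]
        have hj1 : piA (j + 1) = 1 := by
          have h' : (j + 1) % 3 = 0 := by omega
          simp [piA, h']
        rw [hj0, hj1, hmem _ [], hS]
      have hobj := hwin piA piA_play (by decide) hcons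
      rw [if_pos rfl] at hobj
      obtain ⟨n, c, hc, hnone, hY⟩ := hobj
      have k0 : Ar.cycleAt piA 0 = none := by decide
      have k1 : Ar.cycleAt piA 1 = none := by decide
      have k2 : Ar.cycleAt piA 2 = some [1, 3, 0] := by decide
      have hn : n = 2 := by
        by_contra hne
        rcases Nat.lt_or_ge n 2 with hlt | hge
        · interval_cases n <;> simp_all
        · have h2n : 2 < n := by omega
          have := hnone 2 h2n
          simp_all
      subst hn
      rw [k2] at hc
      obtain rfl : c = [1, 3, 0] := (Option.some.injEq _ _ ▸ hc).symm
      have : Ar.cycLabels ([1, 3, 0] : List (Fin 4)) = [0, 0, 0] := by decide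
      rw [this] at hY
      simp [Ywit] at hY
      exact absurd hY (by decide)
    · -- memoryless choice `0 ↦ 2`: Player 1 forces the odd cycle 1,0,2
      have hcons : Ar.Consistent 0 S piB := by
        intro j hj
        have h2 : j % 3 = 1 := by
          by_contra hne
          have h : j % 3 = 0 ∨ j % 3 = 2 := by omega
          rcases h with h | h
          · rw [show piB j = 1 by simp [piB, h]] at hj
            exact absurd hj (by decide)
          · rw [show piB j = 2 by simp [piB, h]] at hj
            exact absurd hj (by decide)
        have hj0 : piB j = 0 := by simp [piB, h2]
        have hj1 : piB (j + 1) = 2 := by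
          have h' : (j + 1) % 3 = 2 := by omega
          simp [piB, h']
        rw [hj0, hj1, hmem _ [], hS]
      have hobj := hwin piB piB_play (by decide) hcons
      rw [if_pos rfl] at hobj
      obtain ⟨n, c, hc, hnone, hY⟩ := hobj
      have k0 : Ar.cycleAt piB 0 = none := by decide
      have k1 : Ar.cycleAt piB 1 = none := by decide
      have k2 : Ar.cycleAt piB 2 = some [1, 0, 2] := by decide
      have hn : n = 2 := by
        by_contra hne
        rcases Nat.lt_or_ge n 2 with hlt | hge
        · interval_cases n <;> simp_all
        · have h2n : 2 < n := by omega
          have := hnone 2 h2n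
          simp_all
      subst hn
      rw [k2] at hc
      obtain rfl : c = [1, 0, 2] := (Option.some.injEq _ _ ▸ hc).symm
      have : Ar.cycLabels ([1, 0, 2] : List (Fin 4)) = [0, 0, 0] := by decide
      rw [this] at hY
      simp [Ywit] at hY
      exact absurd hY (by decide)
end

section
/- Every solitaire first cycle game is pointwise memoryless determined: in a first cycle game where all vertices belong to a single player, if that player has a winning strategy from vertex v, then that player has a memoryless winning strategy from v. -/
section Aux

variable {U : Type} (A : Arena U)

/-- If `π` is injective on `{0..n}`, the stack after `n` steps is just the
prefix of the play. -/
lemma Arena.stack_eq (π : ℕ → A.V) :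
    ∀ n, (∀ a b, a ≤ n → b ≤ n → π a = π b → a = b) →
    A.stackAt π n = (List.range (n + 1)).map π := by
  intro n
  induction n with
  | zero => intro _; simp [Arena.stackAt, List.range_succ]
  | succ n ih =>
    intro hinj
    have h1 := ih (fun a b ha hb => hinj a b (by omega) (by omega))
    have hnot : π (n + 1) ∉ A.stackAt π n := by
      rw [h1]
      simp only [List.mem_map, List.mem_range]
      rintro ⟨a, ha, hae⟩
      have := hinj a (n + 1) (by omega) le_rfl hae
      omega
    show (A.step (A.stackAt π n) (π (n + 1))).1 = _
    rw [Arena.step, if_neg hnot, h1, List.range_succ (n := n + 1), List.map_append]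
    simp

lemma Arena.cycle_none (π : ℕ → A.V) (n : ℕ)
    (hinj : ∀ a b, a ≤ n → b ≤ n → π a = π b → a = b)
    (m : ℕ) (hm : m < n) : A.cycleAt π m = none := by
  have h1 : A.stackAt π m = (List.range (m + 1)).map π :=
    A.stack_eq π m (fun a b ha hb => hinj a b (by omega) (by omega))
  have hnot : π (m + 1) ∉ A.stackAt π m := by
    rw [h1]
    simp only [List.mem_map, List.mem_range]
    rintro ⟨a, ha, hae⟩
    have := hinj a (m + 1) (by omega) (by omega) hae
    omega
  show (A.step (A.stackAt π m) (π (m + 1))).2 = none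
  rw [Arena.step, if_neg hnot]

lemma Arena.stack_congr (π₁ π₂ : ℕ → A.V) :
    ∀ n, (∀ t, t ≤ n → π₁ t = π₂ t) → A.stackAt π₁ n = A.stackAt π₂ n := by
  intro n
  induction n with
  | zero => intro h; simp [Arena.stackAt, h 0 le_rfl]
  | succ n ih =>
    intro h
    show (A.step (A.stackAt π₁ n) (π₁ (n + 1))).1 = (A.step (A.stackAt π₂ n) (π₂ (n + 1))).1
    rw [ih (fun t ht => h t (by omega)), h (n + 1) le_rfl]

lemma Arena.cycle_congr (π₁ π₂ : ℕ → A.V) (n : ℕ)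
    (h : ∀ t, t ≤ n + 1 → π₁ t = π₂ t) : A.cycleAt π₁ n = A.cycleAt π₂ n := by
  show (A.step (A.stackAt π₁ n) (π₁ (n + 1))).2 = (A.step (A.stackAt π₂ n) (π₂ (n + 1))).2
  rw [A.stack_congr π₁ π₂ n (fun t ht => h t (by omega)), h (n + 1) le_rfl]

/-- Characterisation of the first-cycle objective via a known first cycle. -/
lemma Arena.fc_iff (Y : Set (List U)) (π : ℕ → A.V) (n0 : ℕ) (c : List A.V)
    (hc : A.cycleAt π n0 = some c) (hn : ∀ m, m < n0 → A.cycleAt π m = none) :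
    A.FCObj Y π ↔ A.cycLabels c ∈ Y := by
  constructor
  · rintro ⟨n, c', hc', hn', hY⟩
    have hne : n = n0 := by
      rcases lt_trichotomy n n0 with h | h | h
      · rw [hn n h] at hc'; cases hc'
      · exact h
      · rw [hn' n0 h] at hc; cases hc
    subst hne
    rw [hc] at hc'
    cases hc'
    exact hY
  · intro h
    exact ⟨n0, c, hc, hn, h⟩

/-- The unique play generated by a strategy in a solitaire arena. -/
noncomputable def Arena.buildF (S : A.Strategy) (v : A.V) : ℕ → List A.V × A.V :=
  fun n => Nat.rec (([], v) : List A.V × A.V)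
    (fun _ p => (p.1 ++ [p.2], S p.1 p.2)) n

noncomputable def Arena.buildPlay (S : A.Strategy) (v : A.V) (n : ℕ) : A.V :=
  (A.buildF S v n).2

lemma Arena.buildF_fst (S : A.Strategy) (v : A.V) (n : ℕ) :
    (A.buildF S v n).1 = A.hist (A.buildPlay S v) n := by
  induction n with
  | zero => simp [Arena.buildF, Arena.hist]
  | succ n ih =>
    show (A.buildF S v n).1 ++ [(A.buildF S v n).2] = _
    rw [ih]
    simp [Arena.hist, List.range_succ, Arena.buildPlay]

lemma Arena.buildPlay_succ (S : A.Strategy) (v : A.V) (n : ℕ) :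
    A.buildPlay S v (n + 1) = S (A.hist (A.buildPlay S v) n) (A.buildPlay S v n) := by
  show S (A.buildF S v n).1 (A.buildF S v n).2 = _
  rw [A.buildF_fst]
  rfl

end Aux

/-- solitaire first cycle games are pointwise memoryless. -/
theorem stmt1 {U : Type} (A : Arena U) (Y : Set (List U)) (i : Fin 2)
    (hsol : A.SolitaireFor i) (v : A.V)
    (hwin : v ∈ A.WinRegion (A.FCObj Y) i) :
    ∃ S, A.Memoryless S ∧ A.WinsFrom (A.FCObj Y) i S v := by
  classical
  obtain ⟨S, hSlegal, hSwin⟩ := hwin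
  set π := A.buildPlay S v with hπ
  have hplay : A.IsPlay π := fun j => by
    rw [hπ, A.buildPlay_succ]; exact hSlegal _ _
  have h0 : π 0 = v := rfl
  have hcons : A.Consistent i S π := fun j _ => A.buildPlay_succ S v j
  have hres := hSwin π hplay h0 hcons
  have hex : ∃ k, ∃ j, j < k ∧ π j = π k := by
    obtain ⟨a, b, hne, heq⟩ := Finite.exists_ne_map_eq_of_infinite π
    rcases hne.lt_or_gt with h | h
    · exact ⟨b, a, h, heq⟩
    · exact ⟨a, b, h, heq.symm⟩
  set k := Nat.find hex with hk
  obtain ⟨j, hjk, hjeq⟩ := Nat.find_spec hex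
  have hk1 : 1 ≤ k := by omega
  have hinjk : ∀ a b, a < k → b < k → π a = π b → a = b := by
    intro a b ha hb heq
    by_contra hne
    rcases Nat.lt_or_ge a b with h | h
    · have := Nat.find_min' hex ⟨a, h, heq⟩
      omega
    · have h' : b < a := by omega
      have := Nat.find_min' hex ⟨b, h', heq.symm⟩
      omega
  have hstack : A.stackAt π (k - 1) = (List.range k).map π := by
    have := A.stack_eq π (k - 1) (fun a b ha hb => hinjk a b (by omega) (by omega))
    rwa [Nat.sub_add_cancel hk1] at this
  have hmem : π k ∈ A.stackAt π (k - 1) := by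
    rw [hstack]
    exact List.mem_map.2 ⟨j, List.mem_range.2 hjk, hjeq⟩
  obtain ⟨c, hc⟩ : ∃ c, A.cycleAt π (k - 1) = some c := by
    show ∃ c, (A.step (A.stackAt π (k - 1)) (π (k - 1 + 1))).2 = some c
    rw [Nat.sub_add_cancel hk1, Arena.step, if_pos hmem]
    exact ⟨_, rfl⟩
  have hnone : ∀ m, m < k - 1 → A.cycleAt π m = none := fun m hm =>
    A.cycle_none π (k - 1) (fun a b ha hb => hinjk a b (by omega) (by omega)) m hm
  have hiff := A.fc_iff Y π (k - 1) c hc hnone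
  let g : A.V → A.V := fun w =>
    if h : ∃ t, t < k ∧ π t = w then π (Nat.find h + 1) else (A.nodead w).choose
  have hg1 : ∀ t, t < k → g (π t) = π (t + 1) := by
    intro t ht
    have h : ∃ t', t' < k ∧ π t' = π t := ⟨t, ht, rfl⟩
    have hspec := Nat.find_spec h
    have hft : Nat.find h = t := hinjk _ _ hspec.1 ht hspec.2
    simp only [g, dif_pos h, hft]
  have hgE : ∀ w, A.E w (g w) := by
    intro w
    by_cases h : ∃ t, t < k ∧ π t = w
    · have hspec := Nat.find_spec h
      simp only [g, dif_pos h]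
      have h2 := hplay (Nat.find h)
      rwa [hspec.2] at h2
    · simp only [g, dif_neg h]
      exact (A.nodead w).choose_spec
  refine ⟨fun _ w => g w, fun _ _ _ => rfl, fun _ _ => hgE _, ?_⟩
  intro π'' hplay'' h0'' hcons''
  have hagree : ∀ t, t ≤ k → π'' t = π t := by
    intro t
    induction t with
    | zero => intro _; exact h0''.trans h0.symm
    | succ t ih =>
      intro ht
      have h1 : π'' (t + 1) = g (π'' t) := hcons'' t (hsol _)
      rw [h1, ih (by omega), hg1 t (by omega)]
  have hc'' : A.cycleAt π'' (k - 1) = some c := by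
    rw [A.cycle_congr π'' π (k - 1) (fun t ht => hagree t (by omega))]
    exact hc
  have hnone'' : ∀ m, m < k - 1 → A.cycleAt π'' m = none := by
    intro m hm
    rw [A.cycle_congr π'' π m (fun t ht => hagree t (by omega))]
    exact hnone m hm
  have hiff'' := A.fc_iff Y π'' (k - 1) c hc'' hnone''
  split_ifs at hres ⊢ with hi
  · exact hiff''.2 (hiff.1 hres)
  · intro h
    exact hres (hiff.2 (hiff''.1 h))
end

section
/- There exists a solitaire first cycle game that is not uniform memoryless determined: the controlling player wins pointwise-memoryless from every vertex of his winning region, but no single memoryless strategy is winning from every vertex of the winning region. -/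
namespace Stmt2

def Ar : Arena ℕ where
  V := Fin 3
  finV := inferInstance
  decV := inferInstance
  owner := fun _ => 0
  E := fun a b => (a, b) ∈ ([(0,1),(0,2),(1,0),(1,2),(2,1)] : List (Fin 3 × Fin 3))
  nodead := by decide
  lab := fun a _ => a.val + 1

def x0 : Ar.V := (0 : Fin 3)
def x1 : Ar.V := (1 : Fin 3)
def x2 : Ar.V := (2 : Fin 3)

instance (a b : Ar.V) : Decidable (Ar.E a b) :=
  List.instDecidableMemOfLawfulBEq (α := Fin 3 × Fin 3) _ _

def Y : Set (List ℕ) := {l | l = [2,1] ∨ l = [3,2]}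

lemma stk0 (π : ℕ → Ar.V) : Ar.stackAt π 0 = [π 0] := rfl
lemma stkS (π : ℕ → Ar.V) (n : ℕ) :
    Ar.stackAt π (n+1) = (Ar.step (Ar.stackAt π n) (π (n+1))).1 := rfl
lemma cycE (π : ℕ → Ar.V) (n : ℕ) :
    Ar.cycleAt π n = (Ar.step (Ar.stackAt π n) (π (n+1))).2 := rfl

lemma cases3 : ∀ x : Ar.V, x = x0 ∨ x = x1 ∨ x = x2 := by decide

/-! ### Positive direction: memoryless winning strategies from each vertex -/

/-- 0→2, 1→2, 2→1. -/
def S0 : Ar.Strategy := fun _ v => if v = x2 then x1 else x2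
/-- 0→1, 1→0, 2→1. -/
def S1 : Ar.Strategy := fun _ v => if v = x1 then x0 else x1

lemma memS0 : Ar.Memoryless S0 := fun _ _ _ => rfl
lemma memS1 : Ar.Memoryless S1 := fun _ _ _ => rfl

lemma winFrom1 : Ar.WinsFrom (Ar.FCObj Y) 0 S1 x1 := by
  constructor
  · intro h v
    rcases cases3 v with e|e|e <;> subst e
    · exact (show Ar.E x0 x1 by decide)
    · exact (show Ar.E x1 x0 by decide)
    · exact (show Ar.E x2 x1 by decide)
  · intro π _ h0 hc
    rw [if_pos rfl]
    have c : ∀ j, π (j+1) = S1 (Ar.hist π j) (π j) := fun j => hc j rfl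
    have h1 : π 1 = x0 := by rw [c 0, h0]; rfl
    have h2 : π 2 = x1 := by rw [c 1, h1]; rfl
    refine ⟨1, [x1, x0], ?_, ?_, ?_⟩
    · rw [cycE, stkS, stk0, h0, h1, h2]; decide
    · intro m hm
      interval_cases m
      rw [cycE, stk0, h0, h1]; decide
    · exact Or.inl (by decide)

lemma winFrom0 : Ar.WinsFrom (Ar.FCObj Y) 0 S0 x0 := by
  constructor
  · intro h v
    rcases cases3 v with e|e|e <;> subst e
    · exact (show Ar.E x0 x2 by decide)
    · exact (show Ar.E x1 x2 by decide)
    · exact (show Ar.E x2 x1 by decide)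
  · intro π _ h0 hc
    rw [if_pos rfl]
    have c : ∀ j, π (j+1) = S0 (Ar.hist π j) (π j) := fun j => hc j rfl
    have h1 : π 1 = x2 := by rw [c 0, h0]; rfl
    have h2 : π 2 = x1 := by rw [c 1, h1]; rfl
    have h3 : π 3 = x2 := by rw [c 2, h2]; rfl
    refine ⟨2, [x2, x1], ?_, ?_, ?_⟩
    · rw [cycE, stkS, stkS, stk0, h0, h1, h2, h3]; decide
    · intro m hm
      interval_cases m
      · rw [cycE, stk0, h0, h1]; decide
      · rw [cycE, stkS, stk0, h0, h1, h2]; decide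
    · exact Or.inr (by decide)

lemma winFrom2 : Ar.WinsFrom (Ar.FCObj Y) 0 S0 x2 := by
  constructor
  · intro h v
    rcases cases3 v with e|e|e <;> subst e
    · exact (show Ar.E x0 x2 by decide)
    · exact (show Ar.E x1 x2 by decide)
    · exact (show Ar.E x2 x1 by decide)
  · intro π _ h0 hc
    rw [if_pos rfl]
    have c : ∀ j, π (j+1) = S0 (Ar.hist π j) (π j) := fun j => hc j rfl
    have h1 : π 1 = x1 := by rw [c 0, h0]; rfl
    have h2 : π 2 = x2 := by rw [c 1, h1]; rfl
    refine ⟨1, [x2, x1], ?_, ?_, ?_⟩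
    · rw [cycE, stkS, stk0, h0, h1, h2]; decide
    · intro m hm
      interval_cases m
      rw [cycE, stk0, h0, h1]; decide
    · exact Or.inr (by decide)

lemma pm : Ar.PointwiseMemoryless (Ar.FCObj Y) 0 := by
  intro v _
  rcases cases3 v with e|e|e <;> subst e
  · exact ⟨S0, memS0, winFrom0⟩
  · exact ⟨S1, memS1, winFrom1⟩
  · exact ⟨S0, memS0, winFrom2⟩

/-! ### Negative direction: three bad plays -/

def πA : ℕ → Ar.V := fun n => if n % 2 = 0 then x1 else x2
def πB : ℕ → Ar.V := fun n => if n % 2 = 0 then x0 else x1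
def πC : ℕ → Ar.V := fun n => if n % 3 = 0 then x0 else if n % 3 = 1 then x2 else x1

lemma stackA (n : ℕ) : Ar.stackAt πA n = if n % 2 = 0 then [x1] else [x1, x2] := by
  induction n with
  | zero => rfl
  | succ n ih =>
    by_cases h : n % 2 = 0
    · rw [if_pos h] at ih
      have e : πA (n+1) = x2 := by unfold πA; rw [if_neg (by omega)]
      rw [stkS, ih, e, if_neg (by omega)]; decide
    · rw [if_neg h] at ih
      have e : πA (n+1) = x1 := by unfold πA; rw [if_pos (by omega)]
      rw [stkS, ih, e, if_pos (by omega)]; decide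

lemma cycA (n : ℕ) (c : List Ar.V) (hc : Ar.cycleAt πA n = some c) :
    Ar.cycLabels c ∉ Y := by
  rw [cycE, stackA] at hc
  by_cases h : n % 2 = 0
  · have e : πA (n+1) = x2 := by unfold πA; rw [if_neg (by omega)]
    rw [if_pos h, e] at hc
    rw [show Ar.step [x1] x2 = ([x1, x2], none) from by decide] at hc
    exact absurd hc (by simp)
  · have e : πA (n+1) = x1 := by unfold πA; rw [if_pos (by omega)]
    rw [if_neg h, e] at hc
    have : c = [x1, x2] := by
      have e2 : Ar.step [x1, x2] x1 = ([x1], some [x1, x2]) := by decide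
      rw [e2] at hc; exact (Option.some_inj.mp hc).symm
    subst this
    rintro (h|h) <;> revert h <;> decide

lemma stackB (n : ℕ) : Ar.stackAt πB n = if n % 2 = 0 then [x0] else [x0, x1] := by
  induction n with
  | zero => rfl
  | succ n ih =>
    by_cases h : n % 2 = 0
    · rw [if_pos h] at ih
      have e : πB (n+1) = x1 := by unfold πB; rw [if_neg (by omega)]
      rw [stkS, ih, e, if_neg (by omega)]; decide
    · rw [if_neg h] at ih
      have e : πB (n+1) = x0 := by unfold πB; rw [if_pos (by omega)]
      rw [stkS, ih, e, if_pos (by omega)]; decide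

lemma cycB (n : ℕ) (c : List Ar.V) (hc : Ar.cycleAt πB n = some c) :
    Ar.cycLabels c ∉ Y := by
  rw [cycE, stackB] at hc
  by_cases h : n % 2 = 0
  · have e : πB (n+1) = x1 := by unfold πB; rw [if_neg (by omega)]
    rw [if_pos h, e] at hc
    rw [show Ar.step [x0] x1 = ([x0, x1], none) from by decide] at hc
    exact absurd hc (by simp)
  · have e : πB (n+1) = x0 := by unfold πB; rw [if_pos (by omega)]
    rw [if_neg h, e] at hc
    have : c = [x0, x1] := by
      have e2 : Ar.step [x0, x1] x0 = ([x0], some [x0, x1]) := by decide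
      rw [e2] at hc; exact (Option.some_inj.mp hc).symm
    subst this
    rintro (h|h) <;> revert h <;> decide

lemma stackC (n : ℕ) : Ar.stackAt πC n =
    if n % 3 = 0 then [x0] else if n % 3 = 1 then [x0, x2] else [x0, x2, x1] := by
  induction n with
  | zero => rfl
  | succ n ih =>
    have h3 : n % 3 = 0 ∨ n % 3 = 1 ∨ n % 3 = 2 := by omega
    rcases h3 with h|h|h
    · rw [if_pos h] at ih
      have e : πC (n+1) = x2 := by unfold πC; rw [if_neg (by omega), if_pos (by omega)]
      rw [stkS, ih, e, if_neg (by omega), if_pos (by omega)]; decide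
    · rw [if_neg (by omega), if_pos h] at ih
      have e : πC (n+1) = x1 := by unfold πC; rw [if_neg (by omega), if_neg (by omega)]
      rw [stkS, ih, e, if_neg (by omega), if_neg (by omega)]; decide
    · rw [if_neg (by omega), if_neg (by omega)] at ih
      have e : πC (n+1) = x0 := by unfold πC; rw [if_pos (by omega)]
      rw [stkS, ih, e, if_pos (by omega)]; decide

lemma cycC (n : ℕ) (c : List Ar.V) (hc : Ar.cycleAt πC n = some c) :
    Ar.cycLabels c ∉ Y := by
  rw [cycE, stackC] at hc
  have h3 : n % 3 = 0 ∨ n % 3 = 1 ∨ n % 3 = 2 := by omega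
  rcases h3 with h|h|h
  · have e : πC (n+1) = x2 := by unfold πC; rw [if_neg (by omega), if_pos (by omega)]
    rw [if_pos h, e] at hc
    rw [show Ar.step [x0] x2 = ([x0, x2], none) from by decide] at hc
    exact absurd hc (by simp)
  · have e : πC (n+1) = x1 := by unfold πC; rw [if_neg (by omega), if_neg (by omega)]
    rw [if_neg (by omega), if_pos h, e] at hc
    rw [show Ar.step [x0, x2] x1 = ([x0, x2, x1], none) from by decide] at hc
    exact absurd hc (by simp)
  · have e : πC (n+1) = x0 := by unfold πC; rw [if_pos (by omega)]
    rw [if_neg (by omega), if_neg (by omega), e] at hc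
    have : c = [x0, x2, x1] := by
      have e2 : Ar.step [x0, x2, x1] x0 = ([x0], some [x0, x2, x1]) := by decide
      rw [e2] at hc; exact (Option.some_inj.mp hc).symm
    subst this
    rintro (h|h) <;> revert h <;> decide

lemma playA : Ar.IsPlay πA := by
  intro j
  by_cases h : j % 2 = 0
  · have e1 : πA j = x1 := by unfold πA; rw [if_pos h]
    have e2 : πA (j+1) = x2 := by unfold πA; rw [if_neg (by omega)]
    rw [e1, e2]; decide
  · have e1 : πA j = x2 := by unfold πA; rw [if_neg h]
    have e2 : πA (j+1) = x1 := by unfold πA; rw [if_pos (by omega)]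
    rw [e1, e2]; decide

lemma playB : Ar.IsPlay πB := by
  intro j
  by_cases h : j % 2 = 0
  · have e1 : πB j = x0 := by unfold πB; rw [if_pos h]
    have e2 : πB (j+1) = x1 := by unfold πB; rw [if_neg (by omega)]
    rw [e1, e2]; decide
  · have e1 : πB j = x1 := by unfold πB; rw [if_neg h]
    have e2 : πB (j+1) = x0 := by unfold πB; rw [if_pos (by omega)]
    rw [e1, e2]; decide

lemma playC : Ar.IsPlay πC := by
  intro j
  have h3 : j % 3 = 0 ∨ j % 3 = 1 ∨ j % 3 = 2 := by omega
  rcases h3 with h|h|h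
  · have e1 : πC j = x0 := by unfold πC; rw [if_pos h]
    have e2 : πC (j+1) = x2 := by unfold πC; rw [if_neg (by omega), if_pos (by omega)]
    rw [e1, e2]; decide
  · have e1 : πC j = x2 := by unfold πC; rw [if_neg (by omega), if_pos h]
    have e2 : πC (j+1) = x1 := by unfold πC; rw [if_neg (by omega), if_neg (by omega)]
    rw [e1, e2]; decide
  · have e1 : πC j = x1 := by unfold πC; rw [if_neg (by omega), if_neg (by omega)]
    have e2 : πC (j+1) = x0 := by unfold πC; rw [if_pos (by omega)]
    rw [e1, e2]; decide

lemma consA (S : Ar.Strategy) (hm : Ar.Memoryless S)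
    (h1 : S [] x1 = x2) (h2 : S [] x2 = x1) : Ar.Consistent 0 S πA := by
  intro j _
  rw [hm (Ar.hist πA j) [] (πA j)]
  by_cases h : j % 2 = 0
  · have e1 : πA j = x1 := by unfold πA; rw [if_pos h]
    have e2 : πA (j+1) = x2 := by unfold πA; rw [if_neg (by omega)]
    rw [e1, e2, h1]
  · have e1 : πA j = x2 := by unfold πA; rw [if_neg h]
    have e2 : πA (j+1) = x1 := by unfold πA; rw [if_pos (by omega)]
    rw [e1, e2, h2]

lemma consB (S : Ar.Strategy) (hm : Ar.Memoryless S)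
    (h0 : S [] x0 = x1) (h1 : S [] x1 = x0) : Ar.Consistent 0 S πB := by
  intro j _
  rw [hm (Ar.hist πB j) [] (πB j)]
  by_cases h : j % 2 = 0
  · have e1 : πB j = x0 := by unfold πB; rw [if_pos h]
    have e2 : πB (j+1) = x1 := by unfold πB; rw [if_neg (by omega)]
    rw [e1, e2, h0]
  · have e1 : πB j = x1 := by unfold πB; rw [if_neg h]
    have e2 : πB (j+1) = x0 := by unfold πB; rw [if_pos (by omega)]
    rw [e1, e2, h1]

lemma consC (S : Ar.Strategy) (hm : Ar.Memoryless S)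
    (h0 : S [] x0 = x2) (h1 : S [] x1 = x0) (h2 : S [] x2 = x1) :
    Ar.Consistent 0 S πC := by
  intro j _
  rw [hm (Ar.hist πC j) [] (πC j)]
  have h3 : j % 3 = 0 ∨ j % 3 = 1 ∨ j % 3 = 2 := by omega
  rcases h3 with h|h|h
  · have e1 : πC j = x0 := by unfold πC; rw [if_pos h]
    have e2 : πC (j+1) = x2 := by unfold πC; rw [if_neg (by omega), if_pos (by omega)]
    rw [e1, e2, h0]
  · have e1 : πC j = x2 := by unfold πC; rw [if_neg (by omega), if_pos h]
    have e2 : πC (j+1) = x1 := by unfold πC; rw [if_neg (by omega), if_neg (by omega)]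
    rw [e1, e2, h2]
  · have e1 : πC j = x1 := by unfold πC; rw [if_neg (by omega), if_neg (by omega)]
    have e2 : πC (j+1) = x0 := by unfold πC; rw [if_pos (by omega)]
    rw [e1, e2, h1]

lemma notUnif : ¬ Ar.UniformMemoryless (Ar.FCObj Y) 0 := by
  rintro ⟨S, hmem, hwin⟩
  have hw0 : x0 ∈ Ar.WinRegion (Ar.FCObj Y) 0 := ⟨S0, winFrom0⟩
  have hw1 : x1 ∈ Ar.WinRegion (Ar.FCObj Y) 0 := ⟨S1, winFrom1⟩
  have hleg := (hwin x0 hw0).1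
  have hσ2 : S [] x2 = x1 := by
    have hE := hleg [] x2
    rcases cases3 (S [] x2) with h|h|h
    · rw [h] at hE; exact absurd hE (by decide)
    · exact h
    · rw [h] at hE; exact absurd hE (by decide)
  rcases cases3 (S [] x1) with h1|h1|h1
  · rcases cases3 (S [] x0) with h0|h0|h0
    · have hE := hleg [] x0; rw [h0] at hE; exact absurd hE (by decide)
    · have hFC := (hwin x0 hw0).2 πB playB (by unfold πB; rfl) (consB S hmem h0 h1)
      rw [if_pos rfl] at hFC
      obtain ⟨n, c, hc, -, hY⟩ := hFC
      exact cycB n c hc hY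
    · have hFC := (hwin x0 hw0).2 πC playC (by unfold πC; rfl) (consC S hmem h0 h1 hσ2)
      rw [if_pos rfl] at hFC
      obtain ⟨n, c, hc, -, hY⟩ := hFC
      exact cycC n c hc hY
  · have hE := hleg [] x1; rw [h1] at hE; exact absurd hE (by decide)
  · have hFC := (hwin x1 hw1).2 πA playA (by unfold πA; rfl) (consA S hmem h1 hσ2)
    rw [if_pos rfl] at hFC
    obtain ⟨n, c, hc, -, hY⟩ := hFC
    exact cycA n c hc hY

end Stmt2

/-- a solitaire first cycle game that is pointwise memoryless
for its controlling player but not uniform memoryless. -/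
theorem stmt2 :
    ∃ (A : Arena ℕ) (Y : Set (List ℕ)) (i : Fin 2),
      A.SolitaireFor i ∧
      A.PointwiseMemoryless (A.FCObj Y) i ∧
      ¬ A.UniformMemoryless (A.FCObj Y) i :=
  ⟨Stmt2.Ar, Stmt2.Y, 0, fun _ => rfl, Stmt2.pm, Stmt2.notUnif⟩
end

section
/- For every first cycle game on an arena with n vertices, if Player i has a winning strategy from vertex v, then Player i has a winning strategy from v generated by a Moore machine with at most (n-1)! memory states. -/
/-! ### Auxiliary development for `stmt4` -/

namespace Stmt4Aux
set_option linter.unusedSectionVars false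

open List

variable {U : Type} (A : Arena U) [LinearOrder A.V] (v : A.V)

/-- Rotate a list: move the head to the back. -/
def rot {α : Type} : List α → List α
  | [] => []
  | a :: t => t ++ [a]

theorem rot_perm {α : Type} (l : List α) : rot l ~ l := by
  cases l with
  | nil => rfl
  | cons a t => exact List.perm_append_singleton a t

/-- The sorted list of all vertices other than `v`. -/
def Ws : List A.V := Finset.sort (Finset.univ.erase v) (· ≤ ·)

theorem Ws_sorted : (Ws A v).Pairwise (· < ·) := (Finset.sortedLT_sort _).pairwise

theorem Ws_nodup : (Ws A v).Nodup := Finset.sort_nodup _ _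

theorem mem_Ws {x : A.V} : x ∈ Ws A v ↔ x ≠ v := by
  simp [Ws, Finset.mem_sort]

theorem Ws_length : (Ws A v).length = Fintype.card A.V - 1 := by
  rw [Ws, Finset.length_sort, Finset.card_erase_of_mem (Finset.mem_univ v), Finset.card_univ]

def ell1 : List A.V := (Ws A v).tail

def ell2 : List A.V :=
  match Ws A v with
  | a1 :: _ :: r => a1 :: r
  | _ => []

def Lpair : List A.V := rot (Ws A v)

def Lempty : List A.V :=
  match Ws A v with
  | a1 :: a2 :: r => a1 :: (r ++ [a2])
  | l => l

/-- The (sorted) list of unvisited vertices. -/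
def cmpl (h : List A.V) : List A.V := (Ws A v).filter (fun y => decide (y ∉ h))

theorem mem_cmpl {h : List A.V} {y : A.V} : y ∈ cmpl A v h ↔ y ≠ v ∧ y ∉ h := by
  simp [cmpl, List.mem_filter, mem_Ws]

theorem cmpl_sorted (h : List A.V) : (cmpl A v h).Pairwise (· < ·) :=
  List.Pairwise.sublist (List.filter_sublist) (Ws_sorted A v)

/-- The label (memory state) of a history. -/
def lbl : List A.V → List A.V
  | [] => Lempty A v
  | a :: w =>
    if w = [] then Lempty A v
    else if w = ell1 A v ∨ w = ell2 A v then Lpair A v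
    else if (cmpl A v (a :: w)).length ≤ 1 then w ++ cmpl A v (a :: w)
    else rot (cmpl A v (a :: w)) ++ w

/-- Relevant histories: simple paths starting at `v` of length at most `n-1`. -/
def Rel (h : List A.V) : Prop :=
  h.head? = some v ∧ h.Nodup ∧ h.length ≤ Fintype.card A.V - 1

theorem Rel.exists_cons {h : List A.V} (hR : Rel A v h) : ∃ w, h = v :: w := by
  rcases h with _ | ⟨a, w⟩
  · simp [Rel] at hR
  · refine ⟨w, ?_⟩
    have := hR.1
    simp only [head?_cons, Option.some.injEq] at this
    rw [this]

theorem ws_split {w : List A.V} (hR : Rel A v (v :: w)) :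
    Ws A v ~ w ++ cmpl A v (v :: w) := by
  have hfil := List.filter_append_perm (fun y => decide (y ∈ (v :: w))) (Ws A v)
  have hc : (Ws A v).filter (fun y => !decide (y ∈ (v :: w))) = cmpl A v (v :: w) := by
    simp [cmpl]
  rw [hc] at hfil
  have hvw : v ∉ w := by
    have := hR.2.1
    rw [List.nodup_cons] at this
    exact this.1
  have h1 : (Ws A v).filter (fun y => decide (y ∈ (v :: w))) ~ w := by
    apply List.perm_of_nodup_nodup_toFinset_eq
    · exact List.Nodup.filter _ (Ws_nodup A v)
    · exact (List.nodup_cons.mp hR.2.1).2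
    · ext y
      simp only [List.mem_toFinset, List.mem_filter, mem_Ws, decide_eq_true_eq, List.mem_cons]
      constructor
      · rintro ⟨hy, (rfl | hy2)⟩
        · exact absurd rfl hy
        · exact hy2
      · intro hy
        exact ⟨fun hyv => hvw (hyv ▸ hy), Or.inr hy⟩
  calc Ws A v ~ (Ws A v).filter (fun y => decide (y ∈ (v :: w))) ++ cmpl A v (v :: w) := hfil.symm
    _ ~ w ++ cmpl A v (v :: w) := List.Perm.append_right _ h1

theorem len_split {w : List A.V} (hR : Rel A v (v :: w)) :
    w.length + (cmpl A v (v :: w)).length = Fintype.card A.V - 1 := by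
  have := (ws_split A v hR).length_eq
  rw [List.length_append] at this
  rw [← this, Ws_length]

theorem cmpl_ne_nil {w : List A.V} (hR : Rel A v (v :: w)) : cmpl A v (v :: w) ≠ [] := by
  intro hnil
  have hlen := len_split A v hR
  rw [hnil] at hlen
  simp only [List.length_nil, Nat.add_zero] at hlen
  have := hR.2.2
  simp only [List.length_cons] at this
  omega

theorem Lempty_perm : Lempty A v ~ Ws A v := by
  unfold Lempty
  split
  · next a1 a2 r heq =>
      rw [heq]
      exact List.Perm.cons a1 (List.perm_append_singleton a2 r)
  · next => exact List.Perm.refl _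

theorem lbl_perm {h : List A.V} (hR : Rel A v h) : lbl A v h ~ Ws A v := by
  obtain ⟨w, rfl⟩ := hR.exists_cons A v
  have hLe : Lempty A v ~ Ws A v := Lempty_perm A v
  have hLp : Lpair A v ~ Ws A v := rot_perm _
  show lbl A v (v :: w) ~ Ws A v
  rw [lbl]
  split
  · exact hLe
  · split
    · exact hLp
    · have hsplit := ws_split A v hR
      split
      · exact hsplit.symm
      · calc rot (cmpl A v (v :: w)) ++ w
            ~ cmpl A v (v :: w) ++ w := List.Perm.append_right _ (rot_perm _)
          _ ~ w ++ cmpl A v (v :: w) := List.perm_append_comm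
          _ ~ Ws A v := hsplit.symm

/-- Key uniqueness of the "rotated sorted block" decomposition. -/
theorem block_unique {α : Type} [LinearOrder α] {t t' w w' : List α} {z z' : α}
    (ht : t.Pairwise (· < ·)) (ht' : t'.Pairwise (· < ·)) (hne : t ≠ []) (hne' : t' ≠ [])
    (hz : ∀ y ∈ t, z < y) (hz' : ∀ y ∈ t', z' < y)
    (heq : t ++ z :: w = t' ++ z' :: w') : t = t' ∧ z = z' ∧ w = w' := by
  rcases List.append_eq_append_iff.mp heq with ⟨a, h1, h2⟩ | ⟨a, h1, h2⟩
  · cases a with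
    | nil =>
      simp only [List.append_nil] at h1
      rw [List.nil_append] at h2
      obtain ⟨hzz, hww⟩ := List.cons.inj h2
      exact ⟨h1.symm, hzz, hww⟩
    | cons b a' =>
      exfalso
      rw [List.cons_append] at h2
      obtain ⟨hzb, _⟩ := List.cons.inj h2
      subst hzb
      rw [h1] at ht'
      rw [show t ++ z :: a' = t ++ (z :: a') from rfl] at ht'
      have hs := (List.pairwise_append.mp ht').2.2
      obtain ⟨c, t0, rfl⟩ : ∃ c t0, t = c :: t0 := by
        cases t with
        | nil => exact absurd rfl hne
        | cons c t0 => exact ⟨c, t0, rfl⟩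
      have h3 : c < z := hs c (List.mem_cons_self) z (List.mem_cons_self)
      have h4 : z < c := hz c (List.mem_cons_self)
      exact absurd (h3.trans h4) (lt_irrefl _)
  · cases a with
    | nil =>
      simp only [List.append_nil] at h1
      rw [List.nil_append] at h2
      obtain ⟨hzz, hww⟩ := List.cons.inj h2
      exact ⟨h1, hzz.symm, hww.symm⟩
    | cons b a' =>
      exfalso
      rw [List.cons_append] at h2
      obtain ⟨hzb, _⟩ := List.cons.inj h2
      subst hzb
      rw [h1] at ht
      rw [show t' ++ z' :: a' = t' ++ (z' :: a') from rfl] at ht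
      have hs := (List.pairwise_append.mp ht).2.2
      obtain ⟨c, t0, rfl⟩ : ∃ c t0, t' = c :: t0 := by
        cases t' with
        | nil => exact absurd rfl hne'
        | cons c t0 => exact ⟨c, t0, rfl⟩
      have h3 : c < z' := hs c (List.mem_cons_self) z' (List.mem_cons_self)
      have h4 : z' < c := hz' c (List.mem_cons_self)
      exact absurd (h3.trans h4) (lt_irrefl _)


theorem ws_shape2 (h2 : 2 ≤ (Ws A v).length) :
    ∃ a1 a2 r, Ws A v = a1 :: a2 :: r := by
  rcases hWs : Ws A v with _ | ⟨a1, _ | ⟨a2, r⟩⟩ <;> rw [hWs] at h2 <;> simp at h2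
  exact ⟨a1, a2, r, rfl⟩

theorem ell1_eq {a1 a2 : A.V} {r : List A.V} (h : Ws A v = a1 :: a2 :: r) :
    ell1 A v = a2 :: r := by
  rw [ell1, h]
  rfl

theorem ell2_eq {a1 a2 : A.V} {r : List A.V} (h : Ws A v = a1 :: a2 :: r) :
    ell2 A v = a1 :: r := by
  rw [show ell2 A v = (match Ws A v with
    | a1 :: _ :: r => a1 :: r
    | _ => ([] : List A.V)) from rfl, h]

theorem Lpair_eq {a1 a2 : A.V} {r : List A.V} (h : Ws A v = a1 :: a2 :: r) :
    Lpair A v = (a2 :: r) ++ [a1] := by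
  rw [Lpair, h]
  rfl

theorem Lempty_eq {a1 a2 : A.V} {r : List A.V} (h : Ws A v = a1 :: a2 :: r) :
    Lempty A v = a1 :: (r ++ [a2]) := by
  rw [show Lempty A v = (match Ws A v with
    | a1 :: a2 :: r => a1 :: (r ++ [a2])
    | l => l) from rfl, h]

theorem designated_shape {w : List A.V} (hne : w ≠ []) (hd : w = ell1 A v ∨ w = ell2 A v) :
    ∃ a1 a2 r, Ws A v = a1 :: a2 :: r := by
  apply ws_shape2
  by_contra hlt
  push_neg at hlt
  interval_cases hl : (Ws A v).length
  · have : Ws A v = [] := List.length_eq_zero_iff.mp hl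
    rcases hd with rfl | rfl
    · exact hne (by simp [ell1, this])
    · refine hne ?_
      rw [show ell2 A v = (match Ws A v with
        | a1 :: _ :: r => a1 :: r
        | _ => ([] : List A.V)) from rfl, this]
  · obtain ⟨a, ha⟩ := List.length_eq_one_iff.mp hl
    rcases hd with rfl | rfl
    · exact hne (by simp [ell1, ha])
    · refine hne ?_
      rw [show ell2 A v = (match Ws A v with
        | a1 :: _ :: r => a1 :: r
        | _ => ([] : List A.V)) from rfl, ha]

/-- Case analysis on the shape of a label. -/
theorem lbl_cases {w : List A.V} (hR : Rel A v (v :: w)) :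
    (w = [] ∧ lbl A v (v :: w) = Lempty A v)
  ∨ ((w = ell1 A v ∨ w = ell2 A v) ∧ w ≠ [] ∧ lbl A v (v :: w) = Lpair A v)
  ∨ (w ≠ [] ∧ (cmpl A v (v :: w)).length = 1 ∧ w ≠ ell1 A v ∧ w ≠ ell2 A v ∧
      lbl A v (v :: w) = w ++ cmpl A v (v :: w))
  ∨ (w ≠ [] ∧ 2 ≤ (cmpl A v (v :: w)).length ∧
      lbl A v (v :: w) = rot (cmpl A v (v :: w)) ++ w) := by
  by_cases hw : w = []
  · left
    refine ⟨hw, ?_⟩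
    rw [lbl, if_pos hw]
  by_cases hd : w = ell1 A v ∨ w = ell2 A v
  · right; left
    refine ⟨hd, hw, ?_⟩
    rw [lbl, if_neg hw, if_pos hd]
  push_neg at hd
  by_cases hl : (cmpl A v (v :: w)).length ≤ 1
  · right; right; left
    have hnn := cmpl_ne_nil A v hR
    have hpos : 1 ≤ (cmpl A v (v :: w)).length := by
      rcases Nat.eq_zero_or_pos (cmpl A v (v :: w)).length with h0 | h1
      · exact absurd (List.length_eq_zero_iff.mp h0) hnn
      · exact h1
    refine ⟨hw, le_antisymm hl hpos, hd.1, hd.2, ?_⟩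
    rw [lbl, if_neg hw, if_neg (by push_neg; exact hd), if_pos hl]
  · right; right; right
    refine ⟨hw, by omega, ?_⟩
    rw [lbl, if_neg hw, if_neg (by push_neg; exact hd), if_neg hl]

theorem cmpl_head_lt {h : List A.V} {z : A.V} {t : List A.V}
    (hU : cmpl A v h = z :: t) : t.Pairwise (· < ·) ∧ ∀ y ∈ t, z < y := by
  have := cmpl_sorted A v h
  rw [hU] at this
  exact ⟨this.of_cons, fun _ hy => List.rel_of_pairwise_cons this hy⟩

/-- Key injectivity: two relevant histories missing a common vertex have equal labels
only if they are equal. -/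
theorem lbl_inj {h h' : List A.V} {x : A.V} (hR : Rel A v h) (hR' : Rel A v h')
    (hx : x ∉ h) (hx' : x ∉ h') (heq : lbl A v h = lbl A v h') : h = h' := by
  obtain ⟨w, rfl⟩ := hR.exists_cons A v
  obtain ⟨w', rfl⟩ := hR'.exists_cons A v
  have hxv : x ≠ v := fun hh => hx (hh ▸ List.mem_cons_self)
  have hxU : x ∈ cmpl A v (v :: w) := (mem_cmpl A v).mpr ⟨hxv, hx⟩
  have hxU' : x ∈ cmpl A v (v :: w') := (mem_cmpl A v).mpr ⟨hxv, hx'⟩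
  have hlen := len_split A v hR
  have hlen' := len_split A v hR'
  -- helper for Lempty/Lpair vs short contradictions and more
  rcases lbl_cases A v hR with ⟨hw, he⟩ | ⟨hd, hw, he⟩ | ⟨hw, h1, hd1, hd2, he⟩ | ⟨hw, h2, he⟩ <;>
    rcases lbl_cases A v hR' with ⟨hw', he'⟩ | ⟨hd', hw', he'⟩ | ⟨hw', h1', hd1', hd2', he'⟩ |
      ⟨hw', h2', he'⟩ <;> rw [he, he'] at heq
  -- (a,a)
  · rw [hw, hw']
  -- (a,b)
  · exfalso
    obtain ⟨a1, a2, r, hWs⟩ := designated_shape A v hw' hd'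
    rw [Lempty_eq A v hWs, Lpair_eq A v hWs] at heq
    have : a1 = a2 := by
      have := congrArg List.head? heq
      simpa using this
    have hnd := Ws_nodup A v
    rw [hWs, List.nodup_cons] at hnd
    exact hnd.1 (this ▸ List.mem_cons_self)
  -- (a,c)
  · exfalso
    have hm2 : 2 ≤ (Ws A v).length := by
      rw [Ws_length]
      have : 1 ≤ w'.length := List.length_pos_iff.mpr hw'
      omega
    obtain ⟨a1, a2, r, hWs⟩ := ws_shape2 A v hm2
    obtain ⟨z', hz'⟩ := List.length_eq_one_iff.mp h1'
    rw [Lempty_eq A v hWs, hz'] at heq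
    have heq2 : (a1 :: r) ++ [a2] = w' ++ [z'] := by
      simpa using heq
    have h5 := List.append_inj' heq2 (by rfl)
    apply hd2'
    rw [ell2_eq A v hWs]
    exact h5.1.symm
  -- (a,d)
  · exfalso
    have hm2 : 2 ≤ (Ws A v).length := by rw [Ws_length]; omega
    obtain ⟨a1, a2, r, hWs⟩ := ws_shape2 A v hm2
    obtain ⟨z', t', hU'⟩ : ∃ z' t', cmpl A v (v :: w') = z' :: t' := by
      rcases hUU : cmpl A v (v :: w') with _ | ⟨z', t'⟩
      · exact absurd hUU (cmpl_ne_nil A v hR')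
      · exact ⟨z', t', rfl⟩
    obtain ⟨hst', hlt'⟩ := cmpl_head_lt A v hU'
    obtain ⟨c, t'', ht''⟩ : ∃ c t'', t' = c :: t'' := by
      rcases ht : t' with _ | ⟨c, t''⟩
      · rw [hU', ht] at h2'; simp at h2'
      · exact ⟨c, t'', rfl⟩
    rw [Lempty_eq A v hWs, hU', ht''] at heq
    have hhead : a1 = c := by
      have := congrArg List.head? heq
      simpa [rot] using this
    have hzc : z' < c := hlt' c (ht'' ▸ List.mem_cons_self)
    have hz'Ws : z' ∈ Ws A v := by
      have : z' ∈ cmpl A v (v :: w') := hU' ▸ List.mem_cons_self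
      exact (mem_Ws A v).mpr ((mem_cmpl A v).mp this).1
    rw [hWs, List.mem_cons] at hz'Ws
    rcases hz'Ws with h | h
    · rw [h, ← hhead] at hzc
      exact lt_irrefl _ hzc
    · have h6 : a1 < z' := List.rel_of_pairwise_cons (hWs ▸ Ws_sorted A v) h
      rw [← hhead] at hzc
      exact lt_irrefl _ (h6.trans hzc)
  -- (b,a)
  · exfalso
    obtain ⟨a1, a2, r, hWs⟩ := designated_shape A v hw hd
    rw [Lempty_eq A v hWs, Lpair_eq A v hWs] at heq
    have : a2 = a1 := by
      have := congrArg List.head? heq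
      simpa using this
    have hnd := Ws_nodup A v
    rw [hWs, List.nodup_cons] at hnd
    exact hnd.1 (this ▸ List.mem_cons_self)
  -- (b,b)
  · obtain ⟨a1, a2, r, hWs⟩ := designated_shape A v hw hd
    rcases hd with rfl | rfl <;> rcases hd' with rfl | rfl
    · rfl
    · exfalso
      have hx1 : x = a1 := by
        have hmem : x ∈ Ws A v := (mem_Ws A v).mpr hxv
        have hnx := hx
        rw [ell1_eq A v hWs] at hnx
        rw [hWs] at hmem
        simp only [List.mem_cons] at hmem hnx
        push_neg at hnx
        tauto
      have hx2 : x = a2 := by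
        have hmem : x ∈ Ws A v := (mem_Ws A v).mpr hxv
        have hnx := hx'
        rw [ell2_eq A v hWs] at hnx
        rw [hWs] at hmem
        simp only [List.mem_cons] at hmem hnx
        push_neg at hnx
        tauto
      have hnd := Ws_nodup A v
      rw [hWs, List.nodup_cons] at hnd
      exact hnd.1 ((hx1.symm.trans hx2) ▸ List.mem_cons_self)
    · exfalso
      have hx1 : x = a1 := by
        have hmem : x ∈ Ws A v := (mem_Ws A v).mpr hxv
        have hnx := hx'
        rw [ell1_eq A v hWs] at hnx
        rw [hWs] at hmem
        simp only [List.mem_cons] at hmem hnx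
        push_neg at hnx
        tauto
      have hx2 : x = a2 := by
        have hmem : x ∈ Ws A v := (mem_Ws A v).mpr hxv
        have hnx := hx
        rw [ell2_eq A v hWs] at hnx
        rw [hWs] at hmem
        simp only [List.mem_cons] at hmem hnx
        push_neg at hnx
        tauto
      have hnd := Ws_nodup A v
      rw [hWs, List.nodup_cons] at hnd
      exact hnd.1 ((hx1.symm.trans hx2) ▸ List.mem_cons_self)
    · rfl
  -- (b,c)
  · exfalso
    obtain ⟨a1, a2, r, hWs⟩ := designated_shape A v hw hd
    obtain ⟨z', hz'⟩ := List.length_eq_one_iff.mp h1'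
    rw [Lpair_eq A v hWs, hz'] at heq
    have := List.append_inj' heq.symm (by rfl)
    exact hd1' (this.1.trans (ell1_eq A v hWs).symm)
  -- (b,d)
  · exfalso
    obtain ⟨a1, a2, r, hWs⟩ := designated_shape A v hw hd
    obtain ⟨z', t', hU'⟩ : ∃ z' t', cmpl A v (v :: w') = z' :: t' := by
      rcases hUU : cmpl A v (v :: w') with _ | ⟨z', t'⟩
      · exact absurd hUU (cmpl_ne_nil A v hR')
      · exact ⟨z', t', rfl⟩
    obtain ⟨hst', hlt'⟩ := cmpl_head_lt A v hU'
    have ht'ne : t' ≠ [] := by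
      intro h0
      rw [hU', h0] at h2'
      simp at h2'
    rw [Lpair_eq A v hWs, hU'] at heq
    have heq2 : (a2 :: r) ++ a1 :: ([] : List A.V) = t' ++ z' :: w' := by
      simpa [rot] using heq
    have hWss := Ws_sorted A v
    rw [hWs] at hWss
    have hbu := block_unique (hWss.of_cons) hst' (by simp) ht'ne
      (fun _ hy => List.rel_of_pairwise_cons hWss hy) hlt' heq2
    exact hw' hbu.2.2.symm
  -- (c,a)
  · exfalso
    have hm2 : 2 ≤ (Ws A v).length := by
      rw [Ws_length]
      have : 1 ≤ w.length := List.length_pos_iff.mpr hw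
      omega
    obtain ⟨a1, a2, r, hWs⟩ := ws_shape2 A v hm2
    obtain ⟨z, hz⟩ := List.length_eq_one_iff.mp h1
    rw [Lempty_eq A v hWs, hz] at heq
    have heq2 : (a1 :: r) ++ [a2] = w ++ [z] := by
      simpa using heq.symm
    have h5 := List.append_inj' heq2 (by rfl)
    apply hd2
    rw [ell2_eq A v hWs]
    exact h5.1.symm
  -- (c,b)
  · exfalso
    obtain ⟨a1, a2, r, hWs⟩ := designated_shape A v hw' hd'
    obtain ⟨z, hz⟩ := List.length_eq_one_iff.mp h1
    rw [Lpair_eq A v hWs, hz] at heq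
    have := List.append_inj' heq (by rfl)
    exact hd1 (this.1.trans (ell1_eq A v hWs).symm)
  -- (c,c)
  · obtain ⟨z, hz⟩ := List.length_eq_one_iff.mp h1
    obtain ⟨z', hz'⟩ := List.length_eq_one_iff.mp h1'
    rw [hz, hz'] at heq
    have := List.append_inj' heq (by rfl)
    rw [this.1]
  -- (c,d)
  · exfalso
    obtain ⟨z, hz⟩ := List.length_eq_one_iff.mp h1
    obtain ⟨z', t', hU'⟩ : ∃ z' t', cmpl A v (v :: w') = z' :: t' := by
      rcases hUU : cmpl A v (v :: w') with _ | ⟨z', t'⟩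
      · exact absurd hUU (cmpl_ne_nil A v hR')
      · exact ⟨z', t', rfl⟩
    have hxz : x = z := by
      rw [hz] at hxU
      simpa using hxU
    rw [hz, hU'] at heq
    have hgl := congrArg List.getLast? heq
    rw [List.getLast?_concat, List.getLast?_append] at hgl
    rcases hglw : w'.getLast? with _ | b
    · exact hw' (List.getLast?_eq_none_iff.mp hglw)
    · rw [hglw] at hgl
      simp only [Option.some_or, Option.some.injEq] at hgl
      have hbw : b ∈ w' := List.mem_of_mem_getLast? (by rw [hglw]; rfl)
      have : x ∉ w' := fun hmm => hx' (List.mem_cons_of_mem v hmm)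
      exact this (hxz ▸ hgl ▸ hbw)
  -- (d,a)
  · exfalso
    have hm2 : 2 ≤ (Ws A v).length := by rw [Ws_length]; omega
    obtain ⟨a1, a2, r, hWs⟩ := ws_shape2 A v hm2
    obtain ⟨z, t, hU⟩ : ∃ z t, cmpl A v (v :: w) = z :: t := by
      rcases hUU : cmpl A v (v :: w) with _ | ⟨z, t⟩
      · exact absurd hUU (cmpl_ne_nil A v hR)
      · exact ⟨z, t, rfl⟩
    obtain ⟨hst, hlt⟩ := cmpl_head_lt A v hU
    obtain ⟨c, t'', ht''⟩ : ∃ c t'', t = c :: t'' := by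
      rcases ht : t with _ | ⟨c, t''⟩
      · rw [hU, ht] at h2; simp at h2
      · exact ⟨c, t'', rfl⟩
    rw [Lempty_eq A v hWs, hU, ht''] at heq
    have hhead : a1 = c := by
      have := congrArg List.head? heq.symm
      simpa [rot] using this
    have hzc : z < c := hlt c (ht'' ▸ List.mem_cons_self)
    have hzWs : z ∈ Ws A v := by
      have : z ∈ cmpl A v (v :: w) := hU ▸ List.mem_cons_self
      exact (mem_Ws A v).mpr ((mem_cmpl A v).mp this).1
    rw [hWs, List.mem_cons] at hzWs
    rcases hzWs with h | h
    · rw [h, ← hhead] at hzc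
      exact lt_irrefl _ hzc
    · have h6 : a1 < z := List.rel_of_pairwise_cons (hWs ▸ Ws_sorted A v) h
      rw [← hhead] at hzc
      exact lt_irrefl _ (h6.trans hzc)
  -- (d,b)
  · exfalso
    obtain ⟨a1, a2, r, hWs⟩ := designated_shape A v hw' hd'
    obtain ⟨z, t, hU⟩ : ∃ z t, cmpl A v (v :: w) = z :: t := by
      rcases hUU : cmpl A v (v :: w) with _ | ⟨z, t⟩
      · exact absurd hUU (cmpl_ne_nil A v hR)
      · exact ⟨z, t, rfl⟩
    obtain ⟨hst, hlt⟩ := cmpl_head_lt A v hU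
    have htne : t ≠ [] := by
      intro h0
      rw [hU, h0] at h2
      simp at h2
    rw [Lpair_eq A v hWs, hU] at heq
    have heq2 : t ++ z :: w = (a2 :: r) ++ a1 :: ([] : List A.V) := by
      simpa [rot] using heq
    have hWss := Ws_sorted A v
    rw [hWs] at hWss
    have hbu := block_unique hst (hWss.of_cons) htne (by simp) hlt
      (fun _ hy => List.rel_of_pairwise_cons hWss hy) heq2
    exact hw hbu.2.2
  -- (d,c)
  · exfalso
    obtain ⟨z', hz'⟩ := List.length_eq_one_iff.mp h1'
    obtain ⟨z, t, hU⟩ : ∃ z t, cmpl A v (v :: w) = z :: t := by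
      rcases hUU : cmpl A v (v :: w) with _ | ⟨z, t⟩
      · exact absurd hUU (cmpl_ne_nil A v hR)
      · exact ⟨z, t, rfl⟩
    have hxz : x = z' := by
      rw [hz'] at hxU'
      simpa using hxU'
    rw [hz', hU] at heq
    have hgl := congrArg List.getLast? heq
    rw [List.getLast?_concat, List.getLast?_append] at hgl
    rcases hglw : w.getLast? with _ | b
    · exact hw (List.getLast?_eq_none_iff.mp hglw)
    · rw [hglw] at hgl
      simp only [Option.some_or, Option.some.injEq] at hgl
      have hbw : b ∈ w := List.mem_of_mem_getLast? (by rw [hglw]; rfl)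
      have : x ∉ w := fun hmm => hx (List.mem_cons_of_mem v hmm)
      exact this (hxz ▸ hgl ▸ hbw)
  -- (d,d)
  · obtain ⟨z, t, hU⟩ : ∃ z t, cmpl A v (v :: w) = z :: t := by
      rcases hUU : cmpl A v (v :: w) with _ | ⟨z, t⟩
      · exact absurd hUU (cmpl_ne_nil A v hR)
      · exact ⟨z, t, rfl⟩
    obtain ⟨z', t', hU'⟩ : ∃ z' t', cmpl A v (v :: w') = z' :: t' := by
      rcases hUU : cmpl A v (v :: w') with _ | ⟨z', t'⟩
      · exact absurd hUU (cmpl_ne_nil A v hR')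
      · exact ⟨z', t', rfl⟩
    obtain ⟨hst, hlt⟩ := cmpl_head_lt A v hU
    obtain ⟨hst', hlt'⟩ := cmpl_head_lt A v hU'
    have htne : t ≠ [] := by
      intro h0; rw [hU, h0] at h2; simp at h2
    have htne' : t' ≠ [] := by
      intro h0; rw [hU', h0] at h2'; simp at h2'
    rw [hU, hU'] at heq
    have heq2 : t ++ z :: w = t' ++ z' :: w' := by simpa [rot] using heq
    have hbu := block_unique hst hst' htne htne' hlt hlt' heq2
    rw [hbu.2.2]


/-! ### The Moore machine -/

def permsF : Finset (List A.V) := (Ws A v).permutations.toFinset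

theorem mem_permsF {l : List A.V} : l ∈ permsF A v ↔ l ~ Ws A v := by
  rw [permsF, List.mem_toFinset, List.mem_permutations]

theorem permsF_card : (permsF A v).card = Nat.factorial (Fintype.card A.V - 1) := by
  rw [permsF, List.toFinset_card_of_nodup (List.nodup_permutations _ (Ws_nodup A v)),
    List.length_permutations, Ws_length]

theorem lbl_mem_permsF {h : List A.V} (hR : Rel A v h) : lbl A v h ∈ permsF A v :=
  (mem_permsF A v).mpr (lbl_perm A v hR)

noncomputable def candList : List (List A.V) :=
  (List.range (Fintype.card A.V + 1)).flatMap
    (fun k => ((Finset.univ : Finset (Fin k → A.V)).toList.map List.ofFn))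

theorem mem_candList {h : List A.V} (hl : h.length ≤ Fintype.card A.V) :
    h ∈ candList A := by
  rw [candList, List.mem_flatMap]
  refine ⟨h.length, by rw [List.mem_range]; omega, ?_⟩
  rw [List.mem_map]
  exact ⟨h.get, Finset.mem_toList.mpr (Finset.mem_univ _), List.ofFn_get h⟩

def relP (x : A.V) (msg : List A.V) (h : List A.V) : Prop :=
  h.head? = some v ∧ h.Nodup ∧ h.length ≤ Fintype.card A.V - 1 ∧ x ∉ h ∧ lbl A v h = msg

instance relP_dec (x : A.V) (msg : List A.V) : DecidablePred (relP A v x msg) := by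
  intro h
  unfold relP
  infer_instance

/-- The decoder: recover the unique relevant history with this label avoiding `x`. -/
noncomputable def dec (x : A.V) (msg : List A.V) : Option (List A.V) :=
  (candList A).find? (fun h => decide (relP A v x msg h))

theorem dec_eq {h : List A.V} {x : A.V} (hR : Rel A v h) (hx : x ∉ h) :
    dec A v x (lbl A v h) = some h := by
  have hmem : h ∈ candList A := mem_candList A (le_trans hR.2.2 (Nat.sub_le _ _))
  have hp : relP A v x (lbl A v h) h := ⟨hR.1, hR.2.1, hR.2.2, hx, rfl⟩
  have hsome : (dec A v x (lbl A v h)).isSome := by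
    rw [dec, List.find?_isSome]
    exact ⟨h, hmem, by simpa using hp⟩
  obtain ⟨y, hy⟩ := Option.isSome_iff_exists.mp hsome
  have hpy : relP A v x (lbl A v h) y := by
    have := List.find?_some hy
    simpa using this
  rw [hy]
  congr 1
  exact lbl_inj A v ⟨hpy.1, hpy.2.1, hpy.2.2.1⟩ hR hpy.2.2.2.1 hx hpy.2.2.2.2

theorem dec_v_none (msg : List A.V) : dec A v v msg = none := by
  rw [dec, List.find?_eq_none]
  intro h _ hp
  rw [decide_eq_true_eq] at hp
  obtain ⟨w, rfl⟩ := Rel.exists_cons A v ⟨hp.1, hp.2.1, hp.2.2.1⟩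
  exact hp.2.2.2.1 (List.mem_cons_self)

variable (S : A.Strategy)

/-- The Moore machine with `(n-1)!` states implementing the strategy `S` on simple
histories. -/
noncomputable def mkMoore : Moore A where
  M := {l : List A.V // l ∈ permsF A v}
  finM := FinsetCoe.fintype _
  m0 := ⟨Lempty A v, (mem_permsF A v).mpr (Lempty_perm A v)⟩
  upd := fun x m =>
    match dec A v x m.1 with
    | some h =>
      if pf : lbl A v (h ++ [x]) ∈ permsF A v then ⟨lbl A v (h ++ [x]), pf⟩ else m
    | none => m
  out := fun x m =>
    match dec A v x m.1 with
    | some h => S h x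
    | none => S [] x

theorem mkMoore_m0 : (mkMoore A v S).m0.1 = Lempty A v := rfl

theorem mkMoore_card :
    (mkMoore A v S).card = Nat.factorial (Fintype.card A.V - 1) := by
  exact (Fintype.card_coe (permsF A v)).trans (permsF_card A v)

theorem mkMoore_out_dec {x : A.V} {m : (mkMoore A v S).M} {h : List A.V}
    (hd : dec A v x m.1 = some h) : (mkMoore A v S).out x m = S h x := by
  show (match dec A v x m.1 with
    | some h => S h x
    | none => S [] x) = S h x
  rw [hd]

theorem mkMoore_out_none {x : A.V} {m : (mkMoore A v S).M}
    (hd : dec A v x m.1 = none) : (mkMoore A v S).out x m = S [] x := by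
  show (match dec A v x m.1 with
    | some h => S h x
    | none => S [] x) = S [] x
  rw [hd]

theorem mkMoore_legal (hS : A.Legal S) : A.Legal (fun h x => (mkMoore A v S).out x ((mkMoore A v S).run h)) := by
  intro h x
  show A.E x ((mkMoore A v S).out x ((mkMoore A v S).run h))
  rcases hd : dec A v x ((mkMoore A v S).run h).1 with _ | y
  · rw [mkMoore_out_none A v S hd]
    exact hS [] x
  · rw [mkMoore_out_dec A v S hd]
    exact hS y x

theorem run_append (h : List A.V) (x : A.V) :
    (mkMoore A v S).run (h ++ [x]) = (mkMoore A v S).upd x ((mkMoore A v S).run h) := by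
  rw [Moore.run, Moore.run, List.foldl_append]
  rfl

/-- Correctness of the memory on duplicate-free histories of a play. -/
theorem run_eq (π : ℕ → A.V) (h0 : π 0 = v) :
    ∀ j, 1 ≤ j → (A.hist π j).Nodup → j ≤ Fintype.card A.V - 1 →
      ((mkMoore A v S).run (A.hist π j)).1 = lbl A v (A.hist π j) := by
  intro j
  induction j with
  | zero => intro h; omega
  | succ k ih =>
    intro _ hnd hlen
    have hsucc : A.hist π (k + 1) = A.hist π k ++ [π k] := by
      rw [Arena.hist, Arena.hist, List.range_succ, List.map_append]
      rfl
    rcases Nat.eq_zero_or_pos k with rfl | hk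
    · -- j = 1
      have h1 : A.hist π 1 = [v] := by
        rw [hsucc, Arena.hist]
        simp [h0]
      rw [h1]
      show ((mkMoore A v S).run ([] ++ [v])).1 = lbl A v [v]
      rw [run_append]
      have hrun0 : (mkMoore A v S).run [] = (mkMoore A v S).m0 := rfl
      rw [hrun0]
      show ((mkMoore A v S).upd v (mkMoore A v S).m0).1 = lbl A v [v]
      have hdec : dec A v v (mkMoore A v S).m0.1 = none := dec_v_none A v _
      have : (mkMoore A v S).upd v (mkMoore A v S).m0 = (mkMoore A v S).m0 := by
        show (match dec A v v (mkMoore A v S).m0.1 with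
          | some h =>
            if pf : lbl A v (h ++ [v]) ∈ permsF A v then ⟨lbl A v (h ++ [v]), pf⟩
            else (mkMoore A v S).m0
          | none => (mkMoore A v S).m0) = (mkMoore A v S).m0
        rw [hdec]
      rw [this, mkMoore_m0]
      show Lempty A v = lbl A v (v :: [])
      rw [lbl, if_pos rfl]
    · -- k ≥ 1
      rw [hsucc] at hnd ⊢
      have hndk : (A.hist π k).Nodup := (List.nodup_append.mp hnd).1
      have hfresh : π k ∉ A.hist π k := by
        rcases List.nodup_append.mp hnd with ⟨_, _, hdisj⟩
        intro hmm
        exact hdisj _ hmm _ List.mem_cons_self rfl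
      have hlk : (A.hist π k).length = k := by
        rw [Arena.hist, List.length_map, List.length_range]
      have hRk : Rel A v (A.hist π k) := by
        refine ⟨?_, hndk, by omega⟩
        rw [Arena.hist, List.head?_eq_getElem?]
        rw [List.getElem?_map, List.getElem?_range hk]
        simp [h0]
      have hrunk := ih hk hndk (by omega)
      rw [run_append]
      have hdec : dec A v (π k) (((mkMoore A v S).run (A.hist π k)).1) = some (A.hist π k) := by
        rw [hrunk]
        exact dec_eq A v hRk hfresh
      have hRk1 : Rel A v (A.hist π k ++ [π k]) := by
        refine ⟨?_, hnd, ?_⟩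
        · rw [List.head?_append_of_ne_nil]
          · exact hRk.1
          · intro hnil
            rw [hnil] at hlk
            simp at hlk
            omega
        · rw [List.length_append, hlk]
          simpa using hlen
      have hupd : (mkMoore A v S).upd (π k) ((mkMoore A v S).run (A.hist π k))
          = (⟨lbl A v (A.hist π k ++ [π k]), lbl_mem_permsF A v hRk1⟩ :
              {l : List A.V // l ∈ permsF A v}) := by
        show (match dec A v (π k) (((mkMoore A v S).run (A.hist π k)).1) with
          | some h =>
            if pf : lbl A v (h ++ [π k]) ∈ permsF A v then
              (⟨lbl A v (h ++ [π k]), pf⟩ : {l : List A.V // l ∈ permsF A v})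
            else (mkMoore A v S).run (A.hist π k)
          | none => (mkMoore A v S).run (A.hist π k)) = _
        rw [hdec]
        exact dif_pos (lbl_mem_permsF A v hRk1)
      rw [hupd]


/-! ### Play-level lemmas -/

theorem hist_succ (π : ℕ → A.V) (j : ℕ) : A.hist π (j + 1) = A.hist π j ++ [π j] := by
  rw [Arena.hist, Arena.hist, List.range_succ, List.map_append]
  rfl

theorem hist_zero (π : ℕ → A.V) : A.hist π 0 = [] := by
  simp [Arena.hist]

theorem hist_one (π : ℕ → A.V) : A.hist π 1 = [π 0] := by
  rw [Arena.hist]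
  rfl

theorem hist_length (π : ℕ → A.V) (j : ℕ) : (A.hist π j).length = j := by
  simp [Arena.hist]

theorem hist_rel (π : ℕ → A.V) (h0 : π 0 = v) {j : ℕ} (h1 : 1 ≤ j)
    (hnd : (A.hist π j).Nodup) (hle : j ≤ Fintype.card A.V - 1) :
    Rel A v (A.hist π j) := by
  refine ⟨?_, hnd, by rw [hist_length]; exact hle⟩
  rw [Arena.hist, List.head?_eq_getElem?, List.getElem?_map, List.getElem?_range (by omega : 0 < j)]
  simp [h0]

theorem stack_fresh (π : ℕ → A.V) (N : ℕ)
    (hfresh : ∀ j, j < N → π j ∉ A.hist π j) :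
    ∀ j, j + 1 ≤ N → A.stackAt π j = A.hist π (j + 1) := by
  intro j
  induction j with
  | zero =>
    intro _
    rw [hist_one]
    rfl
  | succ k ih =>
    intro hk
    show (A.step (A.stackAt π k) (π (k + 1))).1 = _
    rw [ih (by omega), Arena.step, if_neg (hfresh (k + 1) (by omega))]
    exact (hist_succ A (π) (k + 1)).symm

theorem cyc_none (π : ℕ → A.V) (N : ℕ)
    (hfresh : ∀ j, j < N → π j ∉ A.hist π j) :
    ∀ m, m + 2 ≤ N → A.cycleAt π m = none := by
  intro m hm
  rw [Arena.cycleAt, stack_fresh A π N hfresh m (by omega), Arena.step,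
    if_neg (hfresh (m + 1) (by omega))]

theorem cyc_some (π : ℕ → A.V) (N : ℕ)
    (hfresh : ∀ j, j < N → π j ∉ A.hist π j) (h1 : 1 ≤ N)
    (hrep : π N ∈ A.hist π N) : ∃ c, A.cycleAt π (N - 1) = some c := by
  have hs := stack_fresh A π N hfresh (N - 1) (by omega)
  rw [Arena.cycleAt, hs]
  have hNN : N - 1 + 1 = N := by omega
  rw [hNN, Arena.step, if_pos hrep]
  exact ⟨_, rfl⟩

theorem stackAt_congr (π π' : ℕ → A.V) (j : ℕ) (h : ∀ k, k ≤ j → π k = π' k) :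
    A.stackAt π j = A.stackAt π' j := by
  induction j with
  | zero =>
    show [π 0] = [π' 0]
    rw [h 0 le_rfl]
  | succ k ih =>
    show (A.step (A.stackAt π k) (π (k + 1))).1 = (A.step (A.stackAt π' k) (π' (k + 1))).1
    rw [ih (fun m hm => h m (by omega)), h (k + 1) le_rfl]

theorem cycleAt_congr (π π' : ℕ → A.V) (m : ℕ) (h : ∀ k, k ≤ m + 1 → π k = π' k) :
    A.cycleAt π m = A.cycleAt π' m := by
  rw [Arena.cycleAt, Arena.cycleAt,
    stackAt_congr A π π' m (fun k hk => h k (by omega)), h (m + 1) le_rfl]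

theorem FC_char (Y : Set (List U)) (π : ℕ → A.V) (m₀ : ℕ) (c : List A.V)
    (hsome : A.cycleAt π m₀ = some c) (hnone : ∀ m, m < m₀ → A.cycleAt π m = none) :
    A.FCObj Y π ↔ A.cycLabels c ∈ Y := by
  constructor
  · rintro ⟨n', c', h1, h2, h3⟩
    have hn' : n' = m₀ := by
      rcases lt_trichotomy n' m₀ with h | h | h
      · rw [hnone n' h] at h1
        exact absurd h1 (by simp)
      · exact h
      · rw [h2 m₀ h] at hsome
        exact absurd hsome (by simp)
    subst hn'
    rw [hsome] at h1
    exact (Option.some.inj h1) ▸ h3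
  · intro hY
    exact ⟨m₀, c, hsome, hnone, hY⟩

end Stmt4Aux

/-- (n-1)! memory suffices for winning strategies in FCGs. -/
theorem stmt4 {U : Type} (A : Arena U) (Y : Set (List U)) (i : Fin 2) (v : A.V)
    (hwin : v ∈ A.WinRegion (A.FCObj Y) i) :
    ∃ S, A.WinsFrom (A.FCObj Y) i S v ∧
      ∃ Mm : Moore A, Mm.Generates S ∧
        Mm.card ≤ Nat.factorial (Fintype.card A.V - 1) := by
  classical
  obtain ⟨S, hLegal, hWinAll⟩ := hwin
  letI : LinearOrder A.V :=
    LinearOrder.lift' (Fintype.equivFin A.V) (Fintype.equivFin A.V).injective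
  refine ⟨fun h x => (Stmt4Aux.mkMoore A v S).out x ((Stmt4Aux.mkMoore A v S).run h),
    ⟨Stmt4Aux.mkMoore_legal A v S hLegal, ?_⟩,
    Stmt4Aux.mkMoore A v S, fun h x => rfl,
    le_of_eq (Stmt4Aux.mkMoore_card A v S)⟩
  intro π hplay h0 hcons
  have hn1 : 1 ≤ Fintype.card A.V := Fintype.card_pos_iff.mpr ⟨v⟩
  -- the first time a vertex repeats
  have hex : ∃ j, ¬ (A.hist π (j + 1)).Nodup := by
    refine ⟨Fintype.card A.V, fun hnd => ?_⟩
    have hcard := hnd.length_le_card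
    rw [Stmt4Aux.hist_length] at hcard
    omega
  set N := Nat.find hex with hNdef
  have hNspec : ¬ (A.hist π (N + 1)).Nodup := Nat.find_spec hex
  have hNmin : ∀ j, j < N → (A.hist π (j + 1)).Nodup := fun j hj =>
    not_not.mp (Nat.find_min hex hj)
  have hNle : N ≤ Fintype.card A.V := Nat.find_le (by
    intro hnd
    have hcard := hnd.length_le_card
    rw [Stmt4Aux.hist_length] at hcard
    omega)
  have hN1 : 1 ≤ N := by
    rcases Nat.eq_zero_or_pos N with hz | h
    · exfalso
      apply hNspec
      rw [hz, Stmt4Aux.hist_one]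
      exact List.nodup_cons.mpr ⟨List.not_mem_nil, List.nodup_nil⟩
    · exact h
  have hnodup : ∀ j, j ≤ N → (A.hist π j).Nodup := by
    intro j hj
    rcases Nat.eq_zero_or_pos j with rfl | hjp
    · rw [Stmt4Aux.hist_zero]
      exact List.nodup_nil
    · obtain ⟨k, rfl⟩ : ∃ k, j = k + 1 := ⟨j - 1, by omega⟩
      exact hNmin k (by omega)
  have hfresh : ∀ j, j < N → π j ∉ A.hist π j := by
    intro j hj hmem
    have hnd := hNmin j hj
    rw [Stmt4Aux.hist_succ] at hnd
    rcases List.nodup_append.mp hnd with ⟨_, _, hd⟩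
    exact hd _ hmem _ List.mem_cons_self rfl
  have hrep : π N ∈ A.hist π N := by
    by_contra hrep
    apply hNspec
    rw [Stmt4Aux.hist_succ, List.nodup_append]
    refine ⟨hnodup N le_rfl, List.nodup_cons.mpr ⟨List.not_mem_nil, List.nodup_nil⟩, ?_⟩
    intro a ha b hb
    rw [List.mem_cons] at hb
    rcases hb with rfl | hb
    · exact fun hab => hrep (hab ▸ ha)
    · exact absurd hb List.not_mem_nil
  -- below N, the play follows S
  have hmoves : ∀ j, j < N → A.owner (π j) = i → π (j + 1) = S (A.hist π j) (π j) := by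
    intro j hj how
    have hc := hcons j how
    rcases Nat.eq_zero_or_pos j with rfl | hjp
    · rw [hc]
      show (Stmt4Aux.mkMoore A v S).out (π 0) ((Stmt4Aux.mkMoore A v S).run (A.hist π 0)) =
        S (A.hist π 0) (π 0)
      have hh0 : A.hist π 0 = [] := Stmt4Aux.hist_zero A π
      rw [hh0, h0]
      have hrun0 : (Stmt4Aux.mkMoore A v S).run [] = (Stmt4Aux.mkMoore A v S).m0 := rfl
      rw [hrun0]
      exact Stmt4Aux.mkMoore_out_none A v S (Stmt4Aux.dec_v_none A v _)
    · have hrun := Stmt4Aux.run_eq A v S π h0 j hjp (hnodup j (le_of_lt hj)) (by omega)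
      have hR : Stmt4Aux.Rel A v (A.hist π j) :=
        Stmt4Aux.hist_rel A v π h0 hjp (hnodup j (le_of_lt hj)) (by omega)
      have hd : Stmt4Aux.dec A v (π j) (((Stmt4Aux.mkMoore A v S).run (A.hist π j)).1) =
          some (A.hist π j) := by
        rw [hrun]
        exact Stmt4Aux.dec_eq A v hR (hfresh j hj)
      rw [hc]
      exact Stmt4Aux.mkMoore_out_dec A v S hd
  -- the modified play which follows S forever
  set nxt : List A.V × A.V → List A.V × A.V := fun p =>
    (p.1 ++ [p.2], if A.owner p.2 = i then S p.1 p.2 else (A.nodead p.2).choose) with hnxt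
  set ext : ℕ → List A.V × A.V := fun k => nxt^[k] (A.hist π N, π N) with hext
  set π' : ℕ → A.V := fun j => if j < N then π j else (ext (j - N)).2 with hπ'
  have hext_succ : ∀ k, ext (k + 1) = nxt (ext k) := fun k =>
    Function.iterate_succ_apply' nxt k _
  have hagree : ∀ j, j ≤ N → π' j = π j := by
    intro j hj
    show (if j < N then π j else (ext (j - N)).2) = π j
    split
    · rfl
    · have hjN : j = N := by omega
      subst hjN
      rw [Nat.sub_self]
      rfl
  have hπ'N : ∀ k, π' (N + k) = (ext k).2 := by
    intro k
    show (if N + k < N then π (N + k) else (ext (N + k - N)).2) = (ext k).2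
    rw [if_neg (by omega), Nat.add_sub_cancel_left]
  have hhistagree : ∀ j, j ≤ N → A.hist π' j = A.hist π j := by
    intro j hj
    rw [Arena.hist, Arena.hist]
    apply List.map_congr_left
    intro a ha
    rw [List.mem_range] at ha
    exact hagree a (by omega)
  have hhist' : ∀ k, A.hist π' (N + k) = (ext k).1 := by
    intro k
    induction k with
    | zero => exact hhistagree N le_rfl
    | succ k ih =>
      rw [show N + (k + 1) = (N + k) + 1 from rfl, Stmt4Aux.hist_succ, ih, hπ'N k,
        hext_succ k]
  have hplay' : A.IsPlay π' := by
    intro j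
    by_cases hj : j + 1 ≤ N
    · rw [hagree j (by omega), hagree (j + 1) hj]
      exact hplay j
    · obtain ⟨k, rfl⟩ : ∃ k, j = N + k := ⟨j - N, by omega⟩
      rw [hπ'N k, show N + k + 1 = N + (k + 1) from rfl, hπ'N (k + 1), hext_succ k]
      show A.E (ext k).2
        (if A.owner (ext k).2 = i then S (ext k).1 (ext k).2 else (A.nodead (ext k).2).choose)
      split
      · exact hLegal _ _
      · exact (A.nodead _).choose_spec
  have h0' : π' 0 = v := by
    rw [hagree 0 (by omega), h0]
  have hcons' : A.Consistent i S π' := by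
    intro j how
    by_cases hj : j < N
    · rw [hagree j (by omega)] at how
      rw [hagree (j + 1) (by omega), hagree j (by omega), hhistagree j (by omega)]
      exact hmoves j hj how
    · obtain ⟨k, rfl⟩ : ∃ k, j = N + k := ⟨j - N, by omega⟩
      rw [hπ'N k] at how
      rw [show N + k + 1 = N + (k + 1) from rfl, hπ'N (k + 1), hext_succ k, hhist' k,
        hπ'N k]
      show (if A.owner (ext k).2 = i then S (ext k).1 (ext k).2 else (A.nodead (ext k).2).choose)
        = S (ext k).1 (ext k).2
      rw [if_pos how]
  have houtcome := hWinAll π' hplay' h0' hcons'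
  -- transfer of the first cycle
  obtain ⟨c, hc⟩ := Stmt4Aux.cyc_some A π N hfresh hN1 hrep
  have hcycπ : ∀ m, m < N - 1 → A.cycleAt π m = none := fun m hm =>
    Stmt4Aux.cyc_none A π N hfresh m (by omega)
  have hcyc' : ∀ m, m + 1 ≤ N → A.cycleAt π' m = A.cycleAt π m := fun m hm =>
    (Stmt4Aux.cycleAt_congr A π π' m (fun k hk => (hagree k (by omega)).symm)).symm
  have hiff : (A.FCObj Y π ↔ A.FCObj Y π') := by
    rw [Stmt4Aux.FC_char A Y π (N - 1) c hc hcycπ,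
      Stmt4Aux.FC_char A Y π' (N - 1) c (by rw [hcyc' (N - 1) (by omega)]; exact hc)
        (fun m hm => by rw [hcyc' m (by omega)]; exact hcycπ m hm)]
  by_cases hi : i = 0
  · rw [if_pos hi] at houtcome ⊢
    exact hiff.mpr houtcome
  · rw [if_neg hi] at houtcome ⊢
    exact fun hF => houtcome (hiff.mp hF)
end

section
/- Transfer theorem, regions: if the game (A, O) is Y-greedy, then for each player i, the winning region of Player i in (A, O) equals the winning region of Player i in the first cycle game (A, O_FC(Y)(A)). -/
namespace Stmt6Aux

open Arena

variable {U : Type} (A : Arena U)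

/-- The stack computed from (history, current vertex). -/
def stkOf (h : List A.V) (x : A.V) : List A.V :=
  match h with
  | [] => [x]
  | y :: ys => (ys ++ [x]).foldl (fun s v => (A.step s v).1) [y]

lemma hist_succ (π : ℕ → A.V) (n : ℕ) :
    A.hist π (n+1) = A.hist π n ++ [π n] := by
  simp [Arena.hist, List.range_succ]

lemma stkOf_append (h : List A.V) (x y : A.V) :
    stkOf A (h ++ [x]) y = (A.step (stkOf A h x) y).1 := by
  cases h with
  | nil => rfl
  | cons a l =>
    simp only [stkOf, List.cons_append, List.append_assoc, List.foldl_append]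
    rfl

lemma stackAt_succ (π : ℕ → A.V) (n : ℕ) :
    A.stackAt π (n+1) = (A.step (A.stackAt π n) (π (n+1))).1 := rfl

lemma stkOf_hist (π : ℕ → A.V) : ∀ n, stkOf A (A.hist π n) (π n) = A.stackAt π n
  | 0 => rfl
  | n+1 => by
    rw [hist_succ, stkOf_append, stkOf_hist π n, stackAt_succ]

lemma stackAt_succ_pop (π : ℕ → A.V) (n : ℕ) (h : π (n+1) ∈ A.stackAt π n) :
    A.stackAt π (n+1)
      = (A.stackAt π n).take ((A.stackAt π n).idxOf (π (n+1)) + 1) := by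
  simp [stackAt_succ, Arena.step, h]

lemma stackAt_succ_push (π : ℕ → A.V) (n : ℕ) (h : π (n+1) ∉ A.stackAt π n) :
    A.stackAt π (n+1) = A.stackAt π n ++ [π (n+1)] := by
  simp [stackAt_succ, Arena.step, h]

lemma cycleAt_pop (π : ℕ → A.V) (n : ℕ) (h : π (n+1) ∈ A.stackAt π n) :
    A.cycleAt π n
      = some ((A.stackAt π n).drop ((A.stackAt π n).idxOf (π (n+1)))) := by
  simp [Arena.cycleAt, Arena.step, h]

lemma cycleAt_push (π : ℕ → A.V) (n : ℕ) (h : π (n+1) ∉ A.stackAt π n) :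
    A.cycleAt π n = none := by
  simp [Arena.cycleAt, Arena.step, h]

lemma stackAt_getLast? (π : ℕ → A.V) (n : ℕ) :
    (A.stackAt π n).getLast? = some (π n) := by
  induction n with
  | zero => rfl
  | succ n ih =>
    by_cases h : π (n+1) ∈ A.stackAt π n
    · have hidx : (A.stackAt π n).idxOf (π (n+1)) < (A.stackAt π n).length :=
        List.idxOf_lt_length_iff.mpr h
      rw [stackAt_succ_pop A π n h, List.take_succ]
      have hg : (A.stackAt π n)[(A.stackAt π n).idxOf (π (n+1))]? = some (π (n+1)) := by
        rw [List.getElem?_eq_getElem hidx]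
        have := List.idxOf_get hidx
        rw [List.get_eq_getElem] at this
        rw [this]
      rw [hg]
      exact List.getLast?_concat
    · rw [stackAt_succ_push A π n h]
      exact List.getLast?_concat

lemma stackAt_ne_nil (π : ℕ → A.V) (n : ℕ) : A.stackAt π n ≠ [] := by
  intro hnil
  have := stackAt_getLast? A π n
  rw [hnil] at this
  simp at this

lemma stackAt_length_pos (π : ℕ → A.V) (n : ℕ) : 0 < (A.stackAt π n).length :=
  List.length_pos_iff.mpr (stackAt_ne_nil A π n)

lemma stackAt_getElem_last (π : ℕ → A.V) (n : ℕ)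
    (h : (A.stackAt π n).length - 1 < (A.stackAt π n).length) :
    (A.stackAt π n)[(A.stackAt π n).length - 1] = π n := by
  have h2 := stackAt_getLast? A π n
  rw [List.getLast?_eq_getElem?, List.getElem?_eq_getElem h] at h2
  exact Option.some.inj h2

lemma stackAt_nodup (π : ℕ → A.V) (n : ℕ) : (A.stackAt π n).Nodup := by
  induction n with
  | zero => simp [Arena.stackAt]
  | succ n ih =>
    by_cases h : π (n+1) ∈ A.stackAt π n
    · rw [stackAt_succ_pop A π n h]
      exact (List.take_sublist _ _).nodup ih
    · rw [stackAt_succ_push A π n h]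
      simp [List.nodup_append, ih, h]
      rintro a ha rfl
      exact h ha

lemma stackAt_length_le (π : ℕ → A.V) (n : ℕ) :
    (A.stackAt π n).length ≤ Fintype.card A.V :=
  (stackAt_nodup A π n).length_le_card

lemma stackAt_length_of_no_pop (π : ℕ → A.V) :
    ∀ n, (∀ m, m < n → A.cycleAt π m = none) → (A.stackAt π n).length = n + 1 := by
  intro n
  induction n with
  | zero => intro _; rfl
  | succ n ih =>
    intro h
    have hn : π (n+1) ∉ A.stackAt π n := by
      intro hmem
      have := cycleAt_pop A π n hmem
      rw [h n (Nat.lt_succ_self n)] at this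
      simp at this
    rw [stackAt_succ_push A π n hn]
    simp [ih (fun m hm => h m (Nat.lt_succ_of_lt hm))]

lemma exists_first_pop (π : ℕ → A.V) :
    ∃ n c, A.cycleAt π n = some c ∧ ∀ m, m < n → A.cycleAt π m = none := by
  classical
  have hex : ∃ n, (A.cycleAt π n).isSome := by
    by_contra hc
    push_neg at hc
    have hall : ∀ n, A.cycleAt π n = none := by
      intro n
      exact Option.not_isSome_iff_eq_none.mp (by simpa using hc n)
    have h1 := stackAt_length_of_no_pop A π (Fintype.card A.V) (fun m _ => hall m)
    have h2 := stackAt_length_le A π (Fintype.card A.V)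
    omega
  obtain ⟨c, hc⟩ := Option.isSome_iff_exists.mp (Nat.find_spec hex)
  exact ⟨Nat.find hex, c, hc,
    fun m hm => Option.not_isSome_iff_eq_none.mp (Nat.find_min hex hm)⟩

lemma ac_imp_fc {Z : Set (List U)} (π : ℕ → A.V) (h : A.ACObj Z π) : A.FCObj Z π := by
  obtain ⟨n, c, hc, hmin⟩ := exists_first_pop A π
  exact ⟨n, c, hc, hmin, h n c hc⟩

lemma acc_imp_not_fc {Z : Set (List U)} (π : ℕ → A.V) (h : A.ACObj Zᶜ π) :
    ¬ A.FCObj Z π := by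
  rintro ⟨n, c, hc, -, hY⟩
  exact (h n c hc) hY

end Stmt6Aux


namespace Stmt6Aux

variable {U : Type} (A : Arena U)

/-- Fuelled "Player 0 wins the first-cycle game from stack `s` with top `t`". -/
def win0 (Y : Set (List U)) : ℕ → List A.V → A.V → Prop
  | 0, _, _ => False
  | n+1, s, t =>
    if A.owner t = 0 then
      ∃ w, A.E t w ∧ (if w ∈ s then A.cycLabels (s.drop (s.idxOf w)) ∈ Y
                      else win0 Y n (s ++ [w]) w)
    else
      ∀ w, A.E t w → (if w ∈ s then A.cycLabels (s.drop (s.idxOf w)) ∈ Y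
                      else win0 Y n (s ++ [w]) w)

/-- The one-step condition, with the canonical fuel. -/
def Cnd (Y : Set (List U)) (s : List A.V) (w : A.V) : Prop :=
  if w ∈ s then A.cycLabels (s.drop (s.idxOf w)) ∈ Y
  else win0 A Y (Fintype.card A.V - s.length) (s ++ [w]) w

lemma win0_iff (Y : Set (List U)) (s : List A.V) (t : A.V)
    (hlen : s.length ≤ Fintype.card A.V) :
    win0 A Y (Fintype.card A.V + 1 - s.length) s t ↔
      (if A.owner t = 0 then ∃ w, A.E t w ∧ Cnd A Y s w
       else ∀ w, A.E t w → Cnd A Y s w) := by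
  have h : Fintype.card A.V + 1 - s.length = (Fintype.card A.V - s.length) + 1 := by
    omega
  rw [h]
  rfl

open Classical in
/-- The strategy choosing any successor satisfying `Q` on the current stack. -/
noncomputable def stratQ (Q : List A.V → A.V → Prop) : A.Strategy := fun h x =>
  if hw : ∃ w, A.E x w ∧ Q (stkOf A h x) w then hw.choose
  else (A.nodead x).choose

lemma stratQ_legal (Q : List A.V → A.V → Prop) : A.Legal (stratQ A Q) := by
  intro h x
  unfold stratQ
  split
  · next hw => exact hw.choose_spec.1
  · exact (A.nodead x).choose_spec

/-- Generic invariant lemma: if `W` is an inductive winning certificate for the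
stacks and `Q` a one-step guarantee, every play consistent with `stratQ Q` has
all its cycles in `Z`. -/
lemma main_lemma (i : Fin 2) (W Q : List A.V → A.V → Prop) (Z : Set (List U))
    (H1 : ∀ s t, W s t → s.length ≤ Fintype.card A.V → A.owner t = i →
          ∃ w, A.E t w ∧ Q s w)
    (H2 : ∀ s t, W s t → s.length ≤ Fintype.card A.V → A.owner t ≠ i →
          ∀ w, A.E t w → Q s w)
    (H3 : ∀ s w, Q s w → w ∉ s → W (s ++ [w]) w)
    (H4 : ∀ s w, Q s w → w ∈ s → A.cycLabels (s.drop (s.idxOf w)) ∈ Z)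
    (v : A.V) (hv : W [v] v) :
    ∀ π, A.IsPlay π → π 0 = v → A.Consistent i (stratQ A Q) π → A.ACObj Z π := by
  intro π hplay h0 hcons
  -- one-step consequence of the invariant
  have keyQ : ∀ t, (∀ k (hk : k < (A.stackAt π t).length),
      W ((A.stackAt π t).take (k+1)) ((A.stackAt π t)[k])) →
      Q (A.stackAt π t) (π (t+1)) := by
    intro t hW
    have hpos := stackAt_length_pos A π t
    have hlen := stackAt_length_le A π t
    have hk : (A.stackAt π t).length - 1 < (A.stackAt π t).length := by omega
    have hWσ : W (A.stackAt π t) (π t) := by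
      have := hW ((A.stackAt π t).length - 1) hk
      rw [stackAt_getElem_last A π t hk] at this
      rw [show (A.stackAt π t).length - 1 + 1 = (A.stackAt π t).length by omega,
        List.take_length] at this
      exact this
    by_cases ho : A.owner (π t) = i
    · have hcon := hcons t ho
      have hex : ∃ w, A.E (π t) w ∧ Q (A.stackAt π t) w := H1 _ _ hWσ hlen ho
      have hex' : ∃ w, A.E (π t) w ∧ Q (stkOf A (A.hist π t) (π t)) w := by
        rw [stkOf_hist]; exact hex
      have hq : Q (stkOf A (A.hist π t) (π t)) (stratQ A Q (A.hist π t) (π t)) := by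
        unfold stratQ
        rw [dif_pos hex']
        exact hex'.choose_spec.2
      rw [stkOf_hist] at hq
      rw [hcon]
      exact hq
    · exact H2 _ _ hWσ hlen ho (π (t+1)) (hplay t)
  -- the invariant
  have inv : ∀ t, ∀ k (hk : k < (A.stackAt π t).length),
      W ((A.stackAt π t).take (k+1)) ((A.stackAt π t)[k]) := by
    intro t
    induction t with
    | zero =>
      intro k hk
      have hk0 : k = 0 := by
        have : (A.stackAt π 0).length = 1 := rfl
        omega
      subst hk0
      subst h0
      exact hv
    | succ t iht =>
      have hQ := keyQ t iht
      by_cases h : π (t+1) ∈ A.stackAt π t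
      · rw [stackAt_succ_pop A π t h]
        intro k hk
        have hkm : k < (A.stackAt π t).idxOf (π (t+1)) + 1 := by
          rw [List.length_take] at hk
          omega
        have hk' : k < (A.stackAt π t).length := by
          rw [List.length_take] at hk
          omega
        rw [List.getElem_take, List.take_take,
          show min (k+1) ((A.stackAt π t).idxOf (π (t+1)) + 1) = k + 1 by omega]
        exact iht k hk'
      · rw [stackAt_succ_push A π t h]
        intro k hk
        have hlen' : (A.stackAt π t ++ [π (t+1)]).length = (A.stackAt π t).length + 1 := by
          simp
        by_cases hks : k < (A.stackAt π t).length
        · rw [List.getElem_append_left hks,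
            List.take_append_of_le_length (by omega)]
          exact iht k hks
        · have hk0 : k = (A.stackAt π t).length := by omega
          subst hk0
          rw [List.getElem_concat_length rfl,
            show (A.stackAt π t).length + 1 = (A.stackAt π t ++ [π (t+1)]).length by simp,
            List.take_length]
          exact H3 _ _ hQ h
  -- conclude
  intro n c hc
  by_cases h : π (n+1) ∈ A.stackAt π n
  · have := cycleAt_pop A π n h
    rw [hc] at this
    have hceq : c = (A.stackAt π n).drop ((A.stackAt π n).idxOf (π (n+1))) :=
      Option.some.inj this
    rw [hceq]
    exact H4 _ _ (keyQ n (inv n)) h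
  · rw [cycleAt_push A π n h] at hc
    simp at hc

end Stmt6Aux


namespace Stmt6Aux

variable {U : Type} (A : Arena U)

lemma fin2_cases (x : Fin 2) : x = 0 ∨ x = 1 := by fin_cases x <;> simp

lemma pos_case (Y : Set (List U)) (v : A.V)
    (hv : win0 A Y (Fintype.card A.V) [v] v) :
    ∃ S, A.Legal S ∧ ∀ π, A.IsPlay π → π 0 = v → A.Consistent 0 S π →
      A.ACObj Y π := by
  refine ⟨stratQ A (Cnd A Y), stratQ_legal A _, ?_⟩
  refine main_lemma A 0 (fun s t => win0 A Y (Fintype.card A.V + 1 - s.length) s t)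
    (Cnd A Y) Y ?_ ?_ ?_ ?_ v ?_
  · intro s t hW hlen ho
    have := (win0_iff A Y s t hlen).mp hW
    rwa [if_pos ho] at this
  · intro s t hW hlen ho
    have := (win0_iff A Y s t hlen).mp hW
    rwa [if_neg ho] at this
  · intro s w hQ hws
    unfold Cnd at hQ
    rw [if_neg hws] at hQ
    have he : Fintype.card A.V + 1 - (s ++ [w]).length = Fintype.card A.V - s.length := by
      simp only [List.length_append, List.length_singleton]
      omega
    rw [he]
    exact hQ
  · intro s w hQ hws
    unfold Cnd at hQ
    rwa [if_pos hws] at hQ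
  · simpa using hv

lemma neg_case (Y : Set (List U)) (v : A.V)
    (hv : ¬ win0 A Y (Fintype.card A.V) [v] v) :
    ∃ S, A.Legal S ∧ ∀ π, A.IsPlay π → π 0 = v → A.Consistent 1 S π →
      A.ACObj Yᶜ π := by
  refine ⟨stratQ A (fun s w => ¬ Cnd A Y s w), stratQ_legal A _, ?_⟩
  refine main_lemma A 1 (fun s t => ¬ win0 A Y (Fintype.card A.V + 1 - s.length) s t)
    (fun s w => ¬ Cnd A Y s w) Yᶜ ?_ ?_ ?_ ?_ v ?_
  · intro s t hW hlen ho
    rw [win0_iff A Y s t hlen] at hW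
    have hne : A.owner t ≠ 0 := by rw [ho]; decide
    rw [if_neg hne] at hW
    push_neg at hW
    exact hW
  · intro s t hW hlen ho
    have h0 : A.owner t = 0 := by
      rcases fin2_cases (A.owner t) with h | h
      · exact h
      · exact absurd h ho
    rw [win0_iff A Y s t hlen, if_pos h0] at hW
    push_neg at hW
    exact hW
  · intro s w hQ hws
    intro hwin
    apply hQ
    unfold Cnd
    rw [if_neg hws]
    have he : Fintype.card A.V + 1 - (s ++ [w]).length = Fintype.card A.V - s.length := by
      simp only [List.length_append, List.length_singleton]
      omega
    rw [he] at hwin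
    exact hwin
  · intro s w hQ hws
    simp only [Set.mem_compl_iff]
    intro hy
    apply hQ
    unfold Cnd
    rwa [if_pos hws]
  · simpa using hv

/-- Histories of the play following the move function `f`. -/
def fh (f : List A.V → A.V → A.V) (v : A.V) : ℕ → List A.V
  | 0 => [v]
  | n+1 => fh f v n ++ [f (fh f v n).dropLast ((fh f v n).getLastD v)]

lemma follow (f : List A.V → A.V → A.V) (v : A.V) :
    ∃ π : ℕ → A.V, π 0 = v ∧ ∀ n, π (n+1) = f (A.hist π n) (π n) := by
  classical
  set π : ℕ → A.V := fun n => (fh A f v n).getLastD v with hπ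
  have hfh : ∀ n, fh A f v n = A.hist π (n+1) := by
    intro n
    induction n with
    | zero =>
      simp only [Arena.hist, List.range_succ, List.range_zero, List.map_nil,
        List.map_append, List.map_cons, List.nil_append]
      rfl
    | succ n ih =>
      rw [hist_succ]
      rw [show fh A f v (n+1) = fh A f v n
        ++ [f (fh A f v n).dropLast ((fh A f v n).getLastD v)] from rfl]
      rw [← ih]
      congr 1
      rw [show π (n+1) = (fh A f v (n+1)).getLastD v from rfl]
      rw [show fh A f v (n+1) = fh A f v n
        ++ [f (fh A f v n).dropLast ((fh A f v n).getLastD v)] from rfl]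
      rw [List.getLastD_concat]
  refine ⟨π, rfl, ?_⟩
  intro n
  rw [show π (n+1) = (fh A f v (n+1)).getLastD v from rfl]
  rw [show fh A f v (n+1) = fh A f v n
    ++ [f (fh A f v n).dropLast ((fh A f v n).getLastD v)] from rfl]
  rw [List.getLastD_concat]
  congr 1
  · rw [hfh n, hist_succ, List.dropLast_concat]

lemma not_both (O : A.Objective) (v : A.V)
    (h0 : v ∈ A.WinRegion O 0) (h1 : v ∈ A.WinRegion O 1) : False := by
  obtain ⟨S0, hL0, hW0⟩ := h0
  obtain ⟨S1, hL1, hW1⟩ := h1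
  obtain ⟨π, hπ0, hπs⟩ :=
    follow A (fun h x => if A.owner x = 0 then S0 h x else S1 h x) v
  have hplay : A.IsPlay π := by
    intro j
    rw [hπs j]
    split
    · exact hL0 _ _
    · exact hL1 _ _
  have hc0 : A.Consistent 0 S0 π := by
    intro j hj
    rw [hπs j, if_pos hj]
  have hc1 : A.Consistent 1 S1 π := by
    intro j hj
    rw [hπs j, if_neg (by rw [hj]; decide)]
  have h2 := hW0 π hplay hπ0 hc0
  have h3 := hW1 π hplay hπ0 hc1
  rw [if_pos rfl] at h2
  rw [if_neg (by decide : ¬ (1 : Fin 2) = 0)] at h3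
  exact h3 h2

end Stmt6Aux


/-- Transfer, regions: the winning regions of a Y-greedy game
coincide with those of the first cycle game of Y. -/
theorem stmt6 {U : Type} (A : Arena U) (Y : Set (List U)) (O : A.Objective)
    (h : A.YGreedy Y O) (i : Fin 2) :
    A.WinRegion O i = A.WinRegion (A.FCObj Y) i := by
  classical
  have key : ∀ v : A.V,
      (v ∈ A.WinRegion O 0 ∧ v ∈ A.WinRegion (A.FCObj Y) 0) ∨
      (v ∈ A.WinRegion O 1 ∧ v ∈ A.WinRegion (A.FCObj Y) 1) := by
    intro v
    by_cases hv : Stmt6Aux.win0 A Y (Fintype.card A.V) [v] v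
    · obtain ⟨S, hL, hAC⟩ := Stmt6Aux.pos_case A Y v hv
      left
      constructor
      · refine ⟨S, hL, ?_⟩
        intro π hp h0 hc
        rw [if_pos rfl]
        exact h.1 π hp (hAC π hp h0 hc)
      · refine ⟨S, hL, ?_⟩
        intro π hp h0 hc
        rw [if_pos rfl]
        exact Stmt6Aux.ac_imp_fc A π (hAC π hp h0 hc)
    · obtain ⟨S, hL, hAC⟩ := Stmt6Aux.neg_case A Y v hv
      right
      constructor
      · refine ⟨S, hL, ?_⟩
        intro π hp h0 hc
        rw [if_neg (by decide : ¬ (1 : Fin 2) = 0)]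
        exact h.2 π hp (hAC π hp h0 hc)
      · refine ⟨S, hL, ?_⟩
        intro π hp h0 hc
        rw [if_neg (by decide : ¬ (1 : Fin 2) = 0)]
        exact Stmt6Aux.acc_imp_not_fc A π (hAC π hp h0 hc)
  ext v
  rcases Stmt6Aux.fin2_cases i with rfl | rfl
  · constructor
    · intro hv
      rcases key v with ⟨_, h2⟩ | ⟨h1, _⟩
      · exact h2
      · exact (Stmt6Aux.not_both A O v hv h1).elim
    · intro hv
      rcases key v with ⟨h1, _⟩ | ⟨_, h2⟩
      · exact h1
      · exact (Stmt6Aux.not_both A (A.FCObj Y) v hv h2).elim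
  · constructor
    · intro hv
      rcases key v with ⟨h1, _⟩ | ⟨_, h2⟩
      · exact (Stmt6Aux.not_both A O v h1 hv).elim
      · exact h2
    · intro hv
      rcases key v with ⟨_, h2⟩ | ⟨h1, _⟩
      · exact (Stmt6Aux.not_both A (A.FCObj Y) v h2 hv).elim
      · exact h1
end

section
/- Transfer theorem, strategies: if the game (A, O) is Y-greedy, then for each player i, a memoryless strategy S for Player i is winning from vertex v in (A, O) if and only if S is winning from v in the first cycle game (A, O_FC(Y)(A)). -/
section TransferHelpers
open List

namespace Arena

variable {U : Type} {A : Arena U}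

private lemma getElem_congr' {α : Type*} (q : List α) {a b : ℕ} (h : a = b)
    (ha : a < q.length) (hb : b < q.length) : q[a] = q[b] := by subst h; rfl

private lemma take_succ_eq {α : Type*} {l : List α} {i : ℕ} (h : i < l.length) :
    l.take (i + 1) = l.take i ++ [l[i]] := by
  rw [← List.concat_eq_append, List.take_concat_get]

private lemma succ_mod (T a : ℕ) (hT : 0 < T) :
    (a + 1) % T = if a % T + 1 = T then 0 else a % T + 1 := by
  rcases Nat.lt_or_ge 1 T with h1 | h1
  · rw [Nat.add_mod, Nat.mod_eq_of_lt h1]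
    have hlt : a % T < T := Nat.mod_lt _ hT
    split
    · next heq => rw [heq, Nat.mod_self]
    · next hne => exact Nat.mod_eq_of_lt (by omega)
  · have : T = 1 := by omega
    subst this; simp [Nat.mod_one]

private lemma mod_succ_eq_zero {T a : ℕ} (hT : 0 < T) (h : (a + 1) % T = 0) :
    a % T = T - 1 := by
  rw [succ_mod T a hT] at h
  split at h
  · omega
  · omega

private lemma mod_succ_ne_zero {T a : ℕ} (hT : 0 < T) (h : (a + 1) % T ≠ 0) :
    (a + 1) % T = a % T + 1 := by
  by_cases he : a % T + 1 = T
  · rw [succ_mod T a hT, if_pos he] at h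
    omega
  · rw [succ_mod T a hT, if_neg he]

private lemma getElem_mem_take_iff {q : List A.V} (hnd : q.Nodup) {j k : ℕ}
    (hj : j < q.length) : q[j] ∈ q.take k ↔ j < k := by
  constructor
  · intro h
    obtain ⟨m, hm, hmeq⟩ := List.mem_iff_getElem.mp h
    rw [List.getElem_take] at hmeq
    have hmj : m = j := hnd.getElem_inj_iff.mp hmeq
    have hm' : m < k ⊓ q.length := by simpa [List.length_take] using hm
    omega
  · intro h
    have hlen : j < (q.take k).length := by
      simp only [List.length_take]
      omega
    have : (q.take k)[j] = q[j] := List.getElem_take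
    rw [← this]
    exact List.getElem_mem hlen

private lemma indexOf_getElem_of_nodup {q : List A.V} (hnd : q.Nodup) {j : ℕ}
    (hj : j < q.length) : q.idxOf q[j] = j := by
  have hmem : q[j] ∈ q := List.getElem_mem hj
  have hlt : q.idxOf q[j] < q.length := List.idxOf_lt_length_iff.mpr hmem
  exact hnd.getElem_inj_iff.mp (List.getElem_idxOf hlt)

/-- Stack invariants: nodup, starts at `π 0`, ends at `π n`, and is a chain for
any step-invariant relation. -/
private lemma stack_inv (P : A.V → A.V → Prop) (π : ℕ → A.V)
    (hP : ∀ k, P (π k) (π (k + 1))) (n : ℕ) :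
    (A.stackAt π n).Nodup ∧ (∃ t, A.stackAt π n = π 0 :: t) ∧
      (∃ s, A.stackAt π n = s ++ [π n]) ∧ List.Chain' P (A.stackAt π n) := by
  induction n with
  | zero => exact ⟨by simp [Arena.stackAt], ⟨[], rfl⟩, ⟨[], rfl⟩, List.isChain_singleton _⟩
  | succ n ih =>
    obtain ⟨hnd, ⟨t, ht⟩, ⟨s, hs⟩, hch⟩ := ih
    have hstep : A.stackAt π (n + 1) = (A.step (A.stackAt π n) (π (n + 1))).1 := rfl
    by_cases hmem : π (n + 1) ∈ A.stackAt π n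
    · rw [hstep]
      simp only [Arena.step, if_pos hmem]
      have hilt : (A.stackAt π n).idxOf (π (n + 1)) < (A.stackAt π n).length :=
        List.idxOf_lt_length_iff.mpr hmem
      have h1 : (A.stackAt π n)[(A.stackAt π n).idxOf (π (n + 1))]'hilt = π (n + 1) :=
        List.getElem_idxOf hilt
      generalize hI : (A.stackAt π n).idxOf (π (n + 1)) = I at hilt h1 ⊢
      refine ⟨(List.take_sublist _ _).nodup hnd, ?_, ?_, hch.prefix (List.take_prefix _ _)⟩
      · refine ⟨t.take I, ?_⟩
        rw [ht, List.take_succ_cons]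
      · refine ⟨(A.stackAt π n).take I, ?_⟩
        rw [take_succ_eq hilt, h1]
    · rw [hstep]
      simp only [Arena.step, if_neg hmem]
      refine ⟨?_, ?_, ⟨A.stackAt π n, rfl⟩, ?_⟩
      · rw [List.nodup_append]
        exact ⟨hnd, List.nodup_singleton _, fun a ha b hb hab => hmem (by
          simp only [List.mem_singleton] at hb; rw [hab, hb] at ha; exact ha)⟩
      · exact ⟨t ++ [π (n + 1)], by rw [ht]; simp⟩
      · rw [show List.Chain' P _ = List.IsChain P _ from rfl, List.isChain_append]
        refine ⟨hch, List.isChain_singleton _, ?_⟩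
        intro x hx y hy
        rw [hs, List.getLast?_concat] at hx
        simp only [Option.mem_def, Option.some_inj] at hx
        simp only [List.head?_cons, Option.mem_def, Option.some_inj] at hy
        rw [← hx, ← hy]
        exact hP n

private lemma cycleAt_some {π : ℕ → A.V} {n : ℕ} {c : List A.V}
    (h : A.cycleAt π n = some c) :
    π (n + 1) ∈ A.stackAt π n ∧
      c = (A.stackAt π n).drop ((A.stackAt π n).idxOf (π (n + 1))) := by
  unfold Arena.cycleAt Arena.step at h
  split at h
  · next hmem => simp only [Option.some_inj] at h; exact ⟨hmem, h.symm⟩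
  · simp at h

/-- Some cycle is always produced (pigeonhole). -/
private lemma exists_cycle (π : ℕ → A.V) : ∃ n, (A.cycleAt π n).isSome := by
  by_contra hno
  push_neg at hno
  have hnone : ∀ m, A.cycleAt π m = none := fun m =>
    Option.not_isSome_iff_eq_none.mp (by simpa using hno m)
  have hlen : ∀ n, (A.stackAt π n).length = n + 1 := by
    intro n
    induction n with
    | zero => simp [Arena.stackAt]
    | succ n ih =>
      have h := hnone n
      unfold Arena.cycleAt Arena.step at h
      by_cases hmem : π (n + 1) ∈ A.stackAt π n
      · rw [if_pos hmem] at h; simp at h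
      · have : A.stackAt π (n + 1) = A.stackAt π n ++ [π (n + 1)] := by
          show (A.step (A.stackAt π n) (π (n + 1))).1 = _
          simp [Arena.step, hmem]
        rw [this]
        simp [ih]
  have hnd := (A.stack_inv (fun _ _ => True) π (fun _ => trivial)
    (Fintype.card A.V)).1
  have := hnd.length_le_card
  rw [hlen] at this
  omega

/-- Key construction: given a simple path `q` with a chaining relation `G`
(compatible with the strategy) and a closing edge from the end of `q` back to
position `idx`, the "pump" play follows `q` and then loops on the cycle
forever.  All cycles of its decomposition equal `q.drop idx`, the first one
being output at time `q.length - 1`. -/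
private lemma pump (i : Fin 2) (S : A.Strategy) (hS : A.Memoryless S)
    (G : A.V → A.V → Prop)
    (hGE : ∀ u w, G u w → A.E u w)
    (hGS : ∀ u w, G u w → A.owner u = i → w = S [] u)
    (q : List A.V) (hq : 0 < q.length) (hnd : q.Nodup)
    (hchain : List.Chain' G q) (idx : ℕ) (hidx : idx < q.length)
    (hclose : G (q[q.length - 1]'(by omega)) q[idx]) :
    ∃ π, A.IsPlay π ∧ π 0 = q[0] ∧ A.Consistent i S π ∧
      (∀ m c, A.cycleAt π m = some c → c = q.drop idx) ∧
      A.cycleAt π (q.length - 1) = some (q.drop idx) ∧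
      (∀ m, m < q.length - 1 → A.cycleAt π m = none) := by
  set L := q.length with hL
  set T := L - idx with hTdef
  have hT : 0 < T := by omega
  set g : ℕ → ℕ := fun n => if n < L then n else idx + ((n - L) % T) with hg
  have hglt : ∀ n, g n < L := by
    intro n
    simp only [hg]
    split
    · assumption
    · have := Nat.mod_lt (n - L) hT
      omega
  set π : ℕ → A.V := fun n => q[g n]'(hglt n) with hπ
  have hchget : ∀ (k : ℕ) (hk1 : k < L) (hk2 : k + 1 < L),
      G (q[k]'hk1) (q[k+1]'hk2) := by
    intro k hk1 hk2
    have := List.isChain_iff_getElem.mp hchain k (by omega)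
    simpa using this
  -- the one-step relation holds along π
  have hGstep : ∀ n, G (π n) (π (n + 1)) := by
    intro n
    simp only [hπ]
    by_cases h1 : n + 1 < L
    · have hgn : g n = n := by simp only [hg]; split <;> omega
      have hgn1 : g (n + 1) = n + 1 := by simp only [hg]; split <;> omega
      rw [getElem_congr' q hgn (hglt _) (by omega), getElem_congr' q hgn1 (hglt _) (by omega)]
      exact hchget n (by omega) h1
    · by_cases h2 : n + 1 = L
      · have hz0 : (n + 1 - L) % T = 0 := by
          rw [show n + 1 - L = 0 by omega]
          exact Nat.zero_mod T
        have hgn : g n = L - 1 := by simp only [hg]; split <;> omega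
        have hgn1 : g (n + 1) = idx := by simp only [hg]; split <;> omega
        rw [getElem_congr' q hgn (hglt _) (by omega), getElem_congr' q hgn1 (hglt _) (by omega)]
        exact hclose
      · -- n + 1 > L, so n ≥ L
        have hnL : L ≤ n := by omega
        by_cases hz : (n + 1 - L) % T = 0
        · have hr : (n - L) % T = T - 1 := by
            have h3 : n + 1 - L = (n - L) + 1 := by omega
            rw [h3] at hz
            exact mod_succ_eq_zero hT hz
          have hgn : g n = L - 1 := by simp only [hg]; split <;> omega
          have hgn1 : g (n + 1) = idx := by simp only [hg]; split <;> omega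
          rw [getElem_congr' q hgn (hglt _) (by omega), getElem_congr' q hgn1 (hglt _) (by omega)]
          exact hclose
        · have hr : (n + 1 - L) % T = (n - L) % T + 1 := by
            have h3 : n + 1 - L = (n - L) + 1 := by omega
            rw [h3] at hz ⊢
            exact mod_succ_ne_zero hT hz
          have hlt : (n - L) % T < T := Nat.mod_lt _ hT
          have hlt2 : (n + 1 - L) % T < T := Nat.mod_lt _ hT
          have hgn : g n = idx + (n - L) % T := by
            simp only [hg]; split <;> omega
          have hgn1 : g (n + 1) = idx + (n - L) % T + 1 := by
            simp only [hg]; split <;> omega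
          rw [getElem_congr' q hgn (hglt _) (by omega), getElem_congr' q hgn1 (hglt _) (by omega)]
          exact hchget _ (by omega) (by omega)
  set f : ℕ → ℕ := fun m => if m < L then m + 1 else idx + 1 + ((m - L) % T)
    with hf
  -- evaluation of one step of the stack algorithm
  have hstepeval : ∀ m, A.step (q.take (f m)) (π (m + 1)) =
      (q.take (f (m + 1)),
        if L ≤ m + 1 ∧ (m + 1 - L) % T = 0 then some (q.drop idx) else none) := by
    intro m
    by_cases h1 : m + 1 < L
    · -- push case below the top of q
      have hfm : f m = m + 1 := by simp only [hf]; split <;> omega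
      have hgm : g (m + 1) = m + 1 := by simp only [hg]; split <;> omega
      have hval : π (m + 1) = q[m+1]'(by omega) := by
        simp only [hπ]; exact getElem_congr' q hgm (hglt _) (by omega)
      have hnotmem : π (m + 1) ∉ q.take (f m) := by
        rw [hfm, hval]
        intro hmem
        have := (getElem_mem_take_iff hnd (by omega)).mp hmem
        omega
      simp only [Arena.step, if_neg hnotmem]
      have hcond : ¬ (L ≤ m + 1 ∧ (m + 1 - L) % T = 0) := by
        intro hc; omega
      rw [if_neg hcond]
      have hfm1 : f (m + 1) = m + 2 := by simp only [hf]; split <;> omega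
      rw [hfm, hfm1, hval]
      rw [← List.concat_eq_append, List.take_concat_get]
    · have hLm : L ≤ m + 1 := by omega
      by_cases hz : (m + 1 - L) % T = 0
      · -- pop case: stack is full q, vertex is q[idx]
        have hfmL : f m = L := by
          simp only [hf]
          split
          · omega
          · next hm =>
            have h3 : m + 1 - L = (m - L) + 1 := by omega
            rw [h3] at hz
            have := mod_succ_eq_zero hT hz
            omega
        have hgm : g (m + 1) = idx := by
          simp only [hg]; split <;> omega
        have hval : π (m + 1) = q[idx] := by
          simp only [hπ]; exact getElem_congr' q hgm (hglt _) (by omega)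
        have htake : q.take (f m) = q := by rw [hfmL, hL, List.take_length]
        have hmem : π (m + 1) ∈ q.take (f m) := by
          rw [htake, hval]; exact List.getElem_mem hidx
        simp only [Arena.step, if_pos hmem]
        rw [if_pos ⟨hLm, hz⟩]
        have hio : q.idxOf (π (m + 1)) = idx := by
          rw [hval]
          exact indexOf_getElem_of_nodup hnd hidx
        have hfm1 : f (m + 1) = idx + 1 := by
          simp only [hf]; split <;> omega
        rw [htake, hio, hfm1]
      · -- push case within the cycle
        have hmL : L ≤ m := by
          by_contra hc
          have h4 : m + 1 - L = 0 := by omega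
          rw [h4] at hz
          simp at hz
        have hr : (m + 1 - L) % T = (m - L) % T + 1 := by
          have h3 : m + 1 - L = (m - L) + 1 := by omega
          rw [h3] at hz ⊢
          exact mod_succ_ne_zero hT hz
        have hlt2 : (m + 1 - L) % T < T := Nat.mod_lt _ hT
        have hfm : f m = idx + 1 + (m - L) % T := by
          simp only [hf]; split <;> omega
        have hgm : g (m + 1) = idx + 1 + (m - L) % T := by
          simp only [hg]; split <;> omega
        have hfmlt : f m < L := by omega
        have hval : π (m + 1) = q[f m]'(by omega) := by
          simp only [hπ]
          exact getElem_congr' q (hgm.trans hfm.symm) (hglt _) (by omega)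
        have hnotmem : π (m + 1) ∉ q.take (f m) := by
          rw [hval]
          intro hmem
          have := (getElem_mem_take_iff hnd (by omega)).mp hmem
          omega
        simp only [Arena.step, if_neg hnotmem]
        have hcond : ¬ (L ≤ m + 1 ∧ (m + 1 - L) % T = 0) := by
          intro hc; exact hz hc.2
        rw [if_neg hcond]
        have hfm1 : f (m + 1) = f m + 1 := by
          rw [hfm]
          simp only [hf]; split <;> omega
        rw [hval, hfm1, ← List.concat_eq_append, List.take_concat_get]
  -- closed form of the stack
  have hstack : ∀ m, A.stackAt π m = q.take (f m) := by
    intro m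
    induction m with
    | zero =>
      have hf0 : f 0 = 1 := by simp only [hf]; split <;> omega
      have hg0 : g 0 = 0 := by simp only [hg]; split <;> omega
      show [π 0] = q.take (f 0)
      rw [hf0]
      have h5 : q.take 1 = q.take 0 ++ [q[0]] := by
        rw [← List.concat_eq_append, List.take_concat_get]
      rw [h5]
      simp only [List.take_zero, List.nil_append]
      congr 1
      simp only [hπ]
      exact getElem_congr' q hg0 (hglt _) (by omega)
    | succ m ih =>
      show (A.step (A.stackAt π m) (π (m + 1))).1 = _
      rw [ih, hstepeval m]
  have hcycle : ∀ m, A.cycleAt π m =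
      if L ≤ m + 1 ∧ (m + 1 - L) % T = 0 then some (q.drop idx) else none := by
    intro m
    show (A.step (A.stackAt π m) (π (m + 1))).2 = _
    rw [hstack m, hstepeval m]
  refine ⟨π, fun n => hGE _ _ (hGstep n), ?_, ?_, ?_, ?_, ?_⟩
  · simp only [hπ]
    exact getElem_congr' q (show g 0 = 0 by simp only [hg]; split <;> omega) (hglt _) (by omega)
  · intro j hj
    have h1 := hGS _ _ (hGstep j) hj
    rw [h1, hS [] (A.hist π j) (π j)]
  · intro m c hc
    rw [hcycle m] at hc
    split at hc
    · exact (Option.some_inj.mp hc).symm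
    · simp at hc
  · rw [hcycle]
    have hcond : L ≤ (L - 1) + 1 ∧ ((L - 1) + 1 - L) % T = 0 := by
      refine ⟨by omega, ?_⟩
      rw [show (L - 1) + 1 - L = 0 by omega]
      exact Nat.zero_mod T
    rw [if_pos hcond]
  · intro m hm
    rw [hcycle]
    rw [if_neg (by intro hc; omega)]

/-- Gluing: from any cycle of a consistent play, build the pump play. -/
private lemma pump_of_cycle (i : Fin 2) (S : A.Strategy) (hS : A.Memoryless S)
    {π : ℕ → A.V} (hπ : A.IsPlay π) (hcons : A.Consistent i S π)
    {n : ℕ} {c : List A.V} (hcyc : A.cycleAt π n = some c) :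
    ∃ π', A.IsPlay π' ∧ π' 0 = π 0 ∧ A.Consistent i S π' ∧
      (∀ m c', A.cycleAt π' m = some c' → c' = c) ∧
      ∃ N, A.cycleAt π' N = some c ∧ ∀ m, m < N → A.cycleAt π' m = none := by
  set G : A.V → A.V → Prop :=
    fun u w => A.E u w ∧ (A.owner u = i → w = S [] u) with hG
  have hPk : ∀ k, G (π k) (π (k + 1)) := by
    intro k
    refine ⟨hπ k, fun ho => ?_⟩
    rw [hcons k ho, hS (A.hist π k) [] (π k)]
  obtain ⟨hnd, ⟨t, ht⟩, ⟨s, hs⟩, hch⟩ := A.stack_inv G π hPk n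
  obtain ⟨hmem, hceq⟩ := A.cycleAt_some hcyc
  have hq : 0 < (A.stackAt π n).length := by rw [ht]; simp
  have hidx : (A.stackAt π n).idxOf (π (n + 1)) < (A.stackAt π n).length :=
    List.idxOf_lt_length_iff.mpr hmem
  have h0 : (A.stackAt π n)[0]'(by omega) = π 0 := by
    rw [List.getElem_zero]
    rw [show (A.stackAt π n).head (List.ne_nil_of_length_pos hq)
        = (π 0 :: t).head (by simp) by congr 1]
    rfl
  have hlast : (A.stackAt π n)[(A.stackAt π n).length - 1]'(by omega) = π n := by
    have hne : A.stackAt π n ≠ [] := List.ne_nil_of_length_pos hq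
    rw [← List.getLast_eq_getElem hne]
    rw [show (A.stackAt π n).getLast hne = (s ++ [π n]).getLast (by simp) by congr 1]
    exact List.getLast_concat
  have hclose : G ((A.stackAt π n)[(A.stackAt π n).length - 1]'(by omega))
      ((A.stackAt π n)[(A.stackAt π n).idxOf (π (n + 1))]'hidx) := by
    rw [hlast, List.getElem_idxOf hidx]
    exact hPk n
  obtain ⟨π', h1, h2, h3, h4, h5, h6⟩ :=
    A.pump i S hS G (fun u w h => h.1) (fun u w h => h.2) (A.stackAt π n) hq hnd hch
      ((A.stackAt π n).idxOf (π (n + 1))) hidx hclose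
  rw [← hceq] at h4 h5
  exact ⟨π', h1, h2.trans h0, h3, h4, (A.stackAt π n).length - 1, h5, h6⟩

end Arena

end TransferHelpers

/-- Transfer, strategies: a memoryless strategy wins a Y-greedy
game from v iff it wins the first cycle game of Y from v. -/
theorem stmt7 {U : Type} (A : Arena U) (Y : Set (List U)) (O : A.Objective)
    (h : A.YGreedy Y O) (i : Fin 2) (S : A.Strategy) (hS : A.Memoryless S)
    (v : A.V) :
    A.WinsFrom O i S v ↔ A.WinsFrom (A.FCObj Y) i S v := by
  have key : ∀ π, A.IsPlay π → A.Consistent i S π → ∀ n c, A.cycleAt π n = some c →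
      ∃ π', A.IsPlay π' ∧ π' 0 = π 0 ∧ A.Consistent i S π' ∧
        (∀ m c', A.cycleAt π' m = some c' → c' = c) ∧
        ∃ N, A.cycleAt π' N = some c ∧ ∀ m, m < N → A.cycleAt π' m = none :=
    fun π hπ hcons n c hc => A.pump_of_cycle i S hS hπ hcons hc
  fin_cases i
  · -- i = 0
    constructor
    · rintro ⟨hleg, hwin⟩
      refine ⟨hleg, fun π hπ h0 hcons => ?_⟩
      simp only [if_pos rfl] at *
      have hex : ∃ n, (A.cycleAt π n).isSome := A.exists_cycle π
      obtain ⟨c, hc⟩ := Option.isSome_iff_exists.mp (Nat.find_spec hex)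
      refine ⟨Nat.find hex, c, hc, fun m hm => ?_, ?_⟩
      · have := Nat.find_min hex hm
        exact Option.not_isSome_iff_eq_none.mp (by simpa using this)
      · by_contra hY
        obtain ⟨π', hp', h0', hcons', hall, _⟩ := key π hπ hcons _ c hc
        have hO : O π' := hwin π' hp' (h0'.trans h0) hcons'
        have hAC : A.ACObj Yᶜ π' := by
          intro m c' hc'
          rw [hall m c' hc']
          exact hY
        exact (h.2 π' hp' hAC) hO
    · rintro ⟨hleg, hwin⟩
      refine ⟨hleg, fun π hπ h0 hcons => ?_⟩
      simp only [if_pos rfl] at *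
      refine h.1 π hπ ?_
      intro n c hc
      obtain ⟨π', hp', h0', hcons', hall, _⟩ := key π hπ hcons n c hc
      obtain ⟨n', c', hc', _, hY'⟩ := hwin π' hp' (h0'.trans h0) hcons'
      rwa [hall n' c' hc'] at hY'
  · -- i = 1
    constructor
    · rintro ⟨hleg, hwin⟩
      refine ⟨hleg, fun π hπ h0 hcons => ?_⟩
      have hne : (1 : Fin 2) ≠ 0 := by decide
      simp only [if_neg hne] at *
      rintro ⟨n, c, hc, _, hY⟩
      obtain ⟨π', hp', h0', hcons', hall, _⟩ := key π hπ hcons n c hc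
      have hAC : A.ACObj Y π' := by
        intro m c' hc'
        rw [hall m c' hc']
        exact hY
      exact hwin π' hp' (h0'.trans h0) hcons' (h.1 π' hp' hAC)
    · rintro ⟨hleg, hwin⟩
      refine ⟨hleg, fun π hπ h0 hcons => ?_⟩
      have hne : (1 : Fin 2) ≠ 0 := by decide
      simp only [if_neg hne] at *
      refine h.2 π hπ ?_
      intro n c hc
      intro hY
      obtain ⟨π', hp', h0', hcons', hall, N, hN, hbefore⟩ := key π hπ hcons n c hc
      exact hwin π' hp' (h0'.trans h0) hcons' ⟨N, c, hN, hbefore, hY⟩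
end

section
/- If Y is closed under cyclic permutations and both Y and its complement ¬Y are closed under concatenation, then every arena A is Y-unambiguous: no play has both a suffix all of whose decomposition cycles have labels in Y and a suffix all of whose decomposition cycles have labels in ¬Y. -/
namespace Stmt11Aux

open List

variable {U : Type} (A : Arena U)

/-- Run the stack algorithm over a list of vertices. -/
def runS (s : List A.V) (w : List A.V) : List A.V :=
  w.foldl (fun s v => (A.step s v).1) s

/-- Labels of the walk starting at `u` through `w`. -/
def labWalk : A.V → List A.V → List U
  | _, [] => []
  | u, v :: r => A.lab u v :: labWalk v r

@[simp] lemma runS_nil (s : List A.V) : runS A s [] = s := rfl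

lemma runS_append (s : List A.V) (a b : List A.V) :
    runS A s (a ++ b) = runS A (runS A s a) b :=
  List.foldl_append

lemma runS_single (s : List A.V) (v : A.V) : runS A s [v] = (A.step s v).1 := rfl

lemma step_mem {s : List A.V} {v : A.V} (h : v ∈ s) :
    A.step s v = (s.take (s.idxOf v + 1), some (s.drop (s.idxOf v))) := by
  unfold Arena.step; rw [if_pos h]

lemma step_not_mem {s : List A.V} {v : A.V} (h : v ∉ s) :
    A.step s v = (s ++ [v], none) := by
  unfold Arena.step; rw [if_neg h]

lemma labWalk_append (a : List A.V) : ∀ (u : A.V) (b : List A.V),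
    labWalk A u (a ++ b) = labWalk A u a ++ labWalk A (a.getLastD u) b := by
  induction a with
  | nil => intro u b; simp [labWalk]
  | cons x t ih =>
      intro u b
      simp only [List.cons_append, labWalk, List.getLastD_cons, List.append_eq]
      rw [ih x b]

lemma labWalk_eq_zip : ∀ (w : List A.V) (u : A.V),
    labWalk A u w = List.zipWith A.lab (u :: w) w := by
  intro w
  induction w with
  | nil => intro u; rfl
  | cons v r ih =>
      intro u
      show A.lab u v :: labWalk A v r = A.lab u v :: List.zipWith A.lab (v :: r) r
      rw [ih v]

lemma zipWith_concat_left {α β γ : Type*} (f : α → β → γ) :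
    ∀ (l₁ : List α) (l₂ : List β) (x : α), l₂.length ≤ l₁.length →
      List.zipWith f (l₁ ++ [x]) l₂ = List.zipWith f l₁ l₂ := by
  intro l₁
  induction l₁ with
  | nil => intro l₂ x h; cases l₂ <;> simp_all
  | cons a t ih =>
      intro l₂ x h
      cases l₂ with
      | nil => simp
      | cons b s => simp only [List.cons_append, List.zipWith_cons_cons]
                    rw [ih s x (by simpa using h)]

lemma cycLabels_eq (rest : List A.V) (v : A.V) :
    A.cycLabels (v :: rest) = labWalk A v (rest ++ [v]) := by
  show List.zipWith A.lab (v :: rest) (rest ++ [v]) = _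
  rw [labWalk_eq_zip]
  have : v :: (rest ++ [v]) = (v :: rest) ++ [v] := rfl
  rw [this, zipWith_concat_left A.lab (v :: rest) (rest ++ [v]) v (by simp)]

lemma getLast?_take {α : Type} (l : List α) (i : ℕ) (h : i < l.length) :
    (l.take (i+1)).getLast? = some l[i] := by
  rw [List.getLast?_eq_getElem?]
  have hlen : (l.take (i+1)).length = i + 1 := by
    rw [List.length_take]; omega
  rw [hlen]
  simp only [Nat.add_sub_cancel]
  rw [List.getElem?_take]
  simp [List.getElem?_eq_getElem h]

lemma getLast?_step (s : List A.V) (v : A.V) : ((A.step s v).1).getLast? = some v := by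
  by_cases h : v ∈ s
  · rw [step_mem A h]
    have hi : s.idxOf v < s.length := List.idxOf_lt_length_iff.2 h
    rw [getLast?_take s _ hi, List.getElem_idxOf]
  · rw [step_not_mem A h]
    exact List.getLast?_concat

lemma stackAt_getLast? (ρ : ℕ → A.V) : ∀ n, (A.stackAt ρ n).getLast? = some (ρ n)
  | 0 => rfl
  | n + 1 => getLast?_step A _ _

lemma runS_stackAt (ρ : ℕ → A.V) (a : ℕ) : ∀ m,
    runS A (A.stackAt ρ a) ((List.range m).map (fun j => ρ (a+1+j))) = A.stackAt ρ (a+m) := by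
  intro m
  induction m with
  | zero => rfl
  | succ m ih =>
      rw [List.range_succ, List.map_append, runS_append, ih]
      show (A.step (A.stackAt ρ (a+m)) (ρ (a+1+m))).1 = A.stackAt ρ (a + (m+1))
      have : a + 1 + m = (a + m) + 1 := by omega
      rw [this]
      have : a + (m + 1) = (a + m) + 1 := by omega
      rw [this]
      rfl

lemma runS_pushes (s : List A.V) (w : List A.V) (d : A.V) : ∀ (m : ℕ), m ≤ w.length →
    (∀ j, j < m → w.getD j d ∉ runS A s (w.take j)) →
    runS A s (w.take m) = s ++ w.take m := by
  intro m
  induction m with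
  | zero => intro _ _; simp
  | succ m ih =>
      intro hm hp
      have hmlt : m < w.length := by omega
      have ht : w.take (m+1) = w.take m ++ [w[m]] := by
        rw [List.take_succ, List.getElem?_eq_getElem hmlt]; rfl
      have hih := ih (by omega) (fun j hj => hp j (by omega))
      rw [ht, runS_append, hih, runS_single, step_not_mem, List.append_assoc]
      have := hp m (by omega)
      rw [List.getD_eq_getElem w d hmlt, hih] at this
      exact this


open List

variable {U : Type} (A : Arena U)

theorem keyG (Z : Set (List U)) (hcat : ∀ a b : List U, a ∈ Z → b ∈ Z → a ++ b ∈ Z)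
    (hrot : ∀ x y : List U, x ++ y ∈ Z → y ++ x ∈ Z) :
    ∀ N : ℕ, ∀ (s : List A.V) (u : A.V) (w : List A.V),
      w.length + s.length ≤ N → s.getLast? = some u → w ≠ [] →
      runS A s w = s →
      (∀ j (hj : j < w.length), ∀ c, (A.step (runS A s (w.take j)) (w[j]'hj)).2 = some c →
        A.cycLabels c ∈ Z) →
      labWalk A u w ∈ Z := by
  intro N
  induction N with
  | zero =>
      intro s u w hN _ hw _ _
      cases w with
      | nil => exact absurd rfl hw
      | cons a t => simp at hN
  | succ N IH =>
      intro s u w hN hu hw hrun hcyc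
      classical
      -- existence of a pop
      have hex : ∃ j, j < w.length ∧ w.getD j u ∈ runS A s (w.take j) := by
        by_contra hno
        push_neg at hno
        have hall := runS_pushes A s w u w.length le_rfl (fun j hj => hno j hj)
        rw [List.take_length] at hall
        rw [hrun] at hall
        have hlen := congrArg List.length hall
        rw [List.length_append] at hlen
        have : w.length = 0 := by omega
        exact hw (List.eq_nil_of_length_eq_zero this)
      set m := Nat.find hex with hmdef
      obtain ⟨hmlt, hmem⟩ : m < w.length ∧ w.getD m u ∈ runS A s (w.take m) := Nat.find_spec hex
      have hpush : ∀ j, j < m → w.getD j u ∉ runS A s (w.take j) := by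
        intro j hj
        have h := Nat.find_min hex hj
        push_neg at h
        exact h (by omega)
      have hTs : runS A s (w.take m) = s ++ w.take m :=
        runS_pushes A s w u m (by omega) hpush
      set v := w.getD m u with hvdef
      have hv : w[m]'hmlt = v := (List.getD_eq_getElem w u hmlt).symm
      rw [hTs] at hmem
      set T := s ++ w.take m with hTdef
      have hilt : T.idxOf v < T.length := List.idxOf_lt_length_iff.2 hmem
      set i := T.idxOf v with hidef
      have hTi : T[i]'hilt = v := List.getElem_idxOf hilt
      have hwtm : (w.take m).length = m := by rw [List.length_take]; omega
      have hTlen : T.length = s.length + m := by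
        rw [hTdef, List.length_append, hwtm]
      have hstep : A.step T v = (T.take (i+1), some (T.drop i)) := step_mem A hmem
      have htane : w.take (m+1) = w.take m ++ [v] := by
        rw [List.take_succ, List.getElem?_eq_getElem hmlt, hv]; rfl
      have hrunm1 : runS A s (w.take (m+1)) = T.take (i+1) := by
        rw [htane, runS_append, hTs, runS_single, hstep]
      have hc1 : A.cycLabels (T.drop i) ∈ Z := by
        apply hcyc m hmlt
        simp only [hv]
        rw [hTs, hstep]
      have hsne : s ≠ [] := by
        intro h; rw [h] at hu; simp at hu
      have hslen : 0 < s.length := List.length_pos_iff.2 hsne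
      by_cases hcase : s.length ≤ i + 1
      -- ================= CASE (a) =================
      · have hile : i < s.length + m := hTlen ▸ hilt
        set r := i + 1 - s.length with hrdef
        have hr : i + 1 = s.length + r := by omega
        have hrm : r ≤ m := by omega
        have hvlast : (w.take r).getLastD u = v := by
          rcases Nat.eq_zero_or_pos r with h0 | h0
          · rw [h0]
            simp only [List.take_zero, List.getLastD_nil]
            have hieq : i < s.length := by omega
            have h1 : T[i]'hilt = s[i]'hieq := List.getElem_append_left hieq
            have h2 : s.getLast? = some (s[s.length - 1]'(by omega)) := by
              rw [List.getLast?_eq_getElem?, List.getElem?_eq_getElem (by omega)]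
            rw [hu] at h2
            have h3 : s.length - 1 = i := by omega
            simp only [h3] at h2
            rw [h1] at hTi
            rw [← hTi]
            exact Option.some.inj h2
          · have hr1 : r - 1 < w.length := by omega
            have hig : s.length ≤ i := by omega
            have h1 : T[i]'hilt = (w.take m)[i - s.length]'(by rw [hwtm]; omega) :=
              List.getElem_append_right hig
            have h2 : (w.take m)[i - s.length]'(by rw [hwtm]; omega) = w[i - s.length]'(by omega) :=
              List.getElem_take
            have hidx : i - s.length = r - 1 := by omega
            have hvw : w[r-1]'hr1 = v := by
              rw [← hTi, h1, h2]; simp only [hidx]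
            have h3 : w.take r = w.take ((r-1)+1) := by congr 1; omega
            rw [h3, List.getLastD_eq_getLast?, getLast?_take w (r-1) hr1]
            exact hvw
        have hdrop : T.drop i = v :: (w.take m).drop r := by
          rcases Nat.eq_zero_or_pos r with h0 | h0
          · have hieq : i + 1 = s.length := by omega
            rw [hTdef, List.drop_append]
            have h1 : i - s.length = 0 := by omega
            rw [h1, List.drop_zero]
            have h2 : s.drop i = [v] := by
              have h3 : s.drop i = s[i]'(by omega) :: s.drop (i+1) :=
                List.drop_eq_getElem_cons (by omega)
              have h4 : s.drop (i+1) = ([] : List A.V) := by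
                rw [hieq]; exact List.drop_length
              rw [h3, h4]
              have : s[i]'(by omega) = v :=
                (List.getElem_append_left (by omega) :
                  (s ++ w.take m)[i]'(by rw [List.length_append]; omega) = _).symm.trans hTi
              rw [this]
            rw [h2, h0, List.drop_zero]
            rfl
          · have hig : s.length ≤ i := by omega
            have hieq : i = s.length + (r - 1) := by omega
            show (s ++ w.take m).drop i = _
            rw [hieq, List.drop_length_add_append]
            have hr1 : r - 1 < (w.take m).length := by rw [hwtm]; omega
            rw [List.drop_eq_getElem_cons hr1]
            have he0 : T[i]'hilt = (w.take m)[i - s.length]'(by rw [hwtm]; omega) :=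
              List.getElem_append_right hig
            have hidx : i - s.length = r - 1 := by omega
            simp only [hidx] at he0
            have he : (w.take m)[r-1]'hr1 = v := he0.symm.trans hTi
            rw [he]
            have : r - 1 + 1 = r := by omega
            rw [this]
        have hmid : (w.take (m+1)).drop r = (w.take m).drop r ++ [v] := by
          rw [htane, List.drop_append]
          have : r - (w.take m).length = 0 := by rw [hwtm]; omega
          rw [this, List.drop_zero]
        have hwsplit : w.drop r = ((w.take m).drop r ++ [v]) ++ w.drop (m+1) := by
          rw [← hmid]
          conv_lhs => rw [← List.take_append_drop (m+1) w]
          rw [List.drop_append]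
          have h1 : (w.take (m+1)).length = m + 1 := by rw [List.length_take]; omega
          have h2 : r - (w.take (m+1)).length = 0 := by rw [h1]; omega
          rw [h2, List.drop_zero]
        have hCw : A.cycLabels (T.drop i) = labWalk A v ((w.take m).drop r ++ [v]) := by
          rw [hdrop, cycLabels_eq]
        have hmidlast : ((w.take m).drop r ++ [v]).getLastD v = v := by
          rw [List.getLastD_eq_getLast?, List.getLast?_concat]; rfl
        have hW : labWalk A u w = labWalk A u (w.take r) ++
            (labWalk A v ((w.take m).drop r ++ [v]) ++ labWalk A v (w.drop (m+1))) := by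
          conv_lhs => rw [← List.take_append_drop r w]
          rw [labWalk_append, hvlast, hwsplit, labWalk_append, hmidlast]
        -- the shortened word
        set w' := w.take r ++ w.drop (m+1) with hw'def
        have hlr : (w.take r).length = r := by rw [List.length_take]; omega
        have hpr : runS A s (w.take r) = s ++ w.take r :=
          runS_pushes A s w u r (by omega) (fun j hj => hpush j (by omega))
        have hsr : runS A s (w.take (m+1)) = s ++ w.take r := by
          rw [hrunm1]
          show (s ++ w.take m).take (i+1) = _
          rw [hr, List.take_length_add_append, List.take_take, min_eq_left hrm]
        have hw'run : runS A s w' = s := by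
          rw [hw'def, runS_append, hpr, ← hsr, ← runS_append, List.take_append_drop, hrun]
        have hword' : labWalk A u w' = labWalk A u (w.take r) ++ labWalk A v (w.drop (m+1)) := by
          rw [hw'def, labWalk_append, hvlast]
        by_cases hw'nil : w' = []
        · rw [hw'def] at hw'nil
          obtain ⟨hn1, hn2⟩ := List.append_eq_nil_iff.mp hw'nil
          rw [hW, hn1, hn2]
          show labWalk A u [] ++ (labWalk A v ((w.take m).drop r ++ [v]) ++ labWalk A v []) ∈ Z
          have : labWalk A u [] = ([] : List U) := rfl
          rw [this]
          have : labWalk A v [] = ([] : List U) := rfl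
          rw [this, List.append_nil, List.nil_append]
          rw [← hCw]
          exact hc1
        · have hw'cyc : ∀ j (hj : j < w'.length), ∀ c,
              (A.step (runS A s (w'.take j)) (w'[j]'hj)).2 = some c → A.cycLabels c ∈ Z := by
            intro j hj c hc
            by_cases hjr : j < r
            · have h1 : w'.take j = w.take j := by
                rw [hw'def, List.take_append]
                have h2 : j - (w.take r).length = 0 := by rw [hlr]; omega
                rw [h2, List.take_zero, List.append_nil, List.take_take, min_eq_left (by omega)]
              have h3 : j < (w.take r).length := by rw [hlr]; omega
              have h2 : w'[j]'hj = w[j]'(by omega) :=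
                (List.getElem_append_left h3).trans (List.getElem_take)
              simp only [h1, h2] at hc
              exact hcyc j (by omega) c hc
            · push_neg at hjr
              have hjlen : j < r + (w.length - (m+1)) := by
                rw [hw'def, List.length_append, hlr, List.length_drop] at hj
                omega
              have hj' : j - r < (w.drop (m+1)).length := by rw [List.length_drop]; omega
              have h1 : w'.take j = w.take r ++ (w.drop (m+1)).take (j - r) := by
                rw [hw'def, List.take_append,
                  List.take_of_length_le (by rw [hlr]; omega), hlr]
              have h2 : runS A s (w'.take j) = runS A s (w.take (m + 1 + (j - r))) := by
                rw [h1, runS_append, hpr, ← hsr, ← runS_append, ← List.take_add]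
              have h4 : (w.take r).length ≤ j := by rw [hlr]; omega
              have e1 : w'[j]'hj = (w.drop (m+1))[j - (w.take r).length]'(by
                  rw [List.length_drop, hlr]; omega) :=
                List.getElem_append_right h4
              simp only [hlr] at e1
              have h3 : w'[j]'hj = w[m + 1 + (j - r)]'(by omega) :=
                e1.trans (List.getElem_drop)
              simp only [h2, h3] at hc
              exact hcyc (m + 1 + (j - r)) (by omega) c hc
          have hlen' : w'.length + s.length ≤ N := by
            rw [hw'def, List.length_append, hlr, List.length_drop]
            omega
          have hZ' := IH s u w' hlen' hu hw'nil hw'run hw'cyc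
          rw [hword'] at hZ'
          have h2 := hrot _ _ hZ'
          have h3 := hcat _ _ (hCw ▸ hc1) h2
          rw [← List.append_assoc] at h3
          have h5 := hrot _ _ h3
          rwa [hW]
      -- ================= CASE (b) =================
      · push_neg at hcase
        have hvs : s[i]'(by omega) = v :=
          (List.getElem_append_left (by omega) :
            (s ++ w.take m)[i]'(by rw [List.length_append]; omega) = _).symm.trans hTi
        set s' := s.take (i+1) with hs'def
        have hs'len : s'.length = i + 1 := by rw [hs'def, List.length_take]; omega
        have hs'last : s'.getLast? = some v := by
          rw [hs'def, getLast?_take s i (by omega), hvs]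
        have h1 : runS A s (w.take (m+1)) = s' := by
          rw [hrunm1]
          show (s ++ w.take m).take (i+1) = s'
          rw [List.take_append]
          have h2 : i + 1 - s.length = 0 := by omega
          rw [h2, List.take_zero, List.append_nil, hs'def]
        have hruns' : runS A s' (w.drop (m+1)) = s := by
          rw [← h1, ← runS_append, List.take_append_drop, hrun]
        have hdropne : w.drop (m+1) ≠ [] := by
          intro hnil
          rw [hnil] at hruns'
          have := congrArg List.length hruns'
          rw [runS_nil, hs'len] at this
          omega
        set w'' := w.drop (m+1) ++ w.take (m+1) with hw''def
        have hw''ne : w'' ≠ [] := by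
          intro h
          exact hdropne (List.append_eq_nil_iff.mp h).1
        have hw''run : runS A s' w'' = s' := by
          rw [hw''def, runS_append, hruns', h1]
        have htm1len : (w.take (m+1)).length = m + 1 := by rw [List.length_take]; omega
        have hw''len : w''.length + s'.length ≤ N := by
          rw [hw''def, List.length_append, htm1len, List.length_drop, hs'len]
          omega
        have hw''cyc : ∀ j (hj : j < w''.length), ∀ c,
            (A.step (runS A s' (w''.take j)) (w''[j]'hj)).2 = some c → A.cycLabels c ∈ Z := by
          intro j hj c hc
          have hdl : (w.drop (m+1)).length = w.length - (m+1) := List.length_drop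
          by_cases hjd : j < (w.drop (m+1)).length
          · have ht1 : w''.take j = (w.drop (m+1)).take j := by
              rw [hw''def, List.take_append,
                show j - (w.drop (m+1)).length = 0 by omega, List.take_zero, List.append_nil]
            have hr1 : runS A s' (w''.take j) = runS A s (w.take (m + 1 + j)) := by
              rw [ht1, ← h1, ← runS_append, ← List.take_add]
            have hg1 : w''[j]'hj = w[m + 1 + j]'(by omega) :=
              (List.getElem_append_left hjd).trans (List.getElem_drop)
            simp only [hr1, hg1] at hc
            exact hcyc (m + 1 + j) (by omega) c hc
          · push_neg at hjd
            have hjlen : j < (w.drop (m+1)).length + (m + 1) := by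
              rw [hw''def, List.length_append, htm1len] at hj
              omega
            have hj2 : j - (w.drop (m+1)).length < m + 1 := by omega
            have ht1 : w''.take j = w.drop (m+1) ++ (w.take (m+1)).take (j - (w.drop (m+1)).length) := by
              rw [hw''def, List.take_append, List.take_of_length_le hjd]
            have hj'len : j - (w.drop (m+1)).length < w.length := by omega
            have hr1 : runS A s' (w''.take j) =
                runS A s (w.take (j - (w.drop (m+1)).length)) := by
              rw [ht1, runS_append, hruns', List.take_take,
                min_eq_left (by omega : j - (w.drop (m+1)).length ≤ m + 1)]
            have hg1 : w''[j]'hj = w[j - (w.drop (m+1)).length]'hj'len :=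
              (List.getElem_append_right hjd).trans (List.getElem_take)
            simp only [hr1, hg1] at hc
            exact hcyc _ hj'len c hc
        have hZ'' := IH s' v w'' hw''len hs'last hw''ne hw''run hw''cyc
        have hwlast : w.getLast? = some u := by
          rcases List.eq_nil_or_concat w with h | ⟨t, x, hwtx⟩
          · exact absurd h hw
          · rw [List.concat_eq_append] at hwtx
            have h2 : (runS A s w).getLast? = some x := by
              rw [hwtx, runS_append, runS_single]
              exact getLast?_step A _ _
            rw [hrun, hu] at h2
            rw [hwtx, List.getLast?_concat]
            exact h2.symm
        have htake_last : (w.take (m+1)).getLastD u = v := by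
          rw [List.getLastD_eq_getLast?, htane, List.getLast?_concat]; rfl
        have hdrop_last : (w.drop (m+1)).getLastD v = u := by
          rw [List.getLastD_eq_getLast?]
          have h2 : (w.drop (m+1)).getLast? = w.getLast? := by
            conv_rhs => rw [← List.take_append_drop (m+1) w]
            rw [List.getLast?_append]
            rcases List.eq_nil_or_concat (w.drop (m+1)) with h | ⟨t, x, htx⟩
            · exact absurd h hdropne
            · rw [List.concat_eq_append] at htx
              rw [htx, List.getLast?_concat, Option.some_or]
          rw [h2, hwlast]; rfl
        have hWb : labWalk A u w = labWalk A u (w.take (m+1)) ++ labWalk A v (w.drop (m+1)) := by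
          conv_lhs => rw [← List.take_append_drop (m+1) w]
          rw [labWalk_append, htake_last]
        have hW'' : labWalk A v w'' =
            labWalk A v (w.drop (m+1)) ++ labWalk A u (w.take (m+1)) := by
          rw [hw''def, labWalk_append, hdrop_last]
        rw [hW''] at hZ''
        have := hrot _ _ hZ''
        rwa [hWb]



open List

variable {U : Type} (A : Arena U)

lemma nodup_stackAt (ρ : ℕ → A.V) : ∀ n, (A.stackAt ρ n).Nodup
  | 0 => by simp [Arena.stackAt]
  | n+1 => by
      have ih := nodup_stackAt ρ n
      show ((A.step (A.stackAt ρ n) (ρ (n+1))).1).Nodup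
      by_cases h : ρ (n+1) ∈ A.stackAt ρ n
      · rw [step_mem A h]
        exact List.Nodup.sublist (List.take_sublist _ _) ih
      · rw [step_not_mem A h, List.nodup_append]
        refine ⟨ih, List.nodup_singleton _, fun x hx y hxv => ?_⟩
        rw [List.mem_singleton] at hxv
        subst hxv
        exact fun e => h (e ▸ hx)

lemma finite_nodup : Finite {s : List A.V // s.Nodup} := by
  apply Finite.of_injective (fun l : {s : List A.V // s.Nodup} =>
    (fun i : Fin (Fintype.card A.V + 1) => l.val[i.val]?))
  intro l₁ l₂ h
  apply Subtype.ext
  apply List.ext_getElem?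
  intro n
  by_cases hn : n < Fintype.card A.V + 1
  · exact congrFun h ⟨n, hn⟩
  · have e1 : l₁.val[n]? = none :=
      List.getElem?_eq_none (le_trans l₁.2.length_le_card (by omega))
    have e2 : l₂.val[n]? = none :=
      List.getElem?_eq_none (le_trans l₂.2.length_le_card (by omega))
    rw [e1, e2]

lemma windowY (Z : Set (List U)) (hcat : ∀ a b : List U, a ∈ Z → b ∈ Z → a ++ b ∈ Z)
    (hrot : ∀ x y : List U, x ++ y ∈ Z → y ++ x ∈ Z) (ρ : ℕ → A.V)
    (hAC : ∀ n c, A.cycleAt ρ n = some c → A.cycLabels c ∈ Z)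
    (a b : ℕ) (hab : a < b) (hst : A.stackAt ρ a = A.stackAt ρ b) :
    labWalk A (ρ a) ((List.range (b - a)).map (fun j => ρ (a + 1 + j))) ∈ Z := by
  have hwlen : ((List.range (b - a)).map (fun j => ρ (a + 1 + j))).length = b - a := by
    rw [List.length_map, List.length_range]
  refine keyG A Z hcat hrot
    (((List.range (b - a)).map (fun j => ρ (a + 1 + j))).length + (A.stackAt ρ a).length)
    (A.stackAt ρ a) (ρ a) _ le_rfl (stackAt_getLast? A ρ a) ?_ ?_ ?_
  · intro hnil
    rw [hnil] at hwlen
    simp at hwlen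
    omega
  · rw [runS_stackAt A ρ a (b - a), show a + (b - a) = b by omega, ← hst]
  · intro j hj c hc
    rw [hwlen] at hj
    have h1 : ((List.range (b - a)).map (fun j => ρ (a + 1 + j))).take j =
        (List.range j).map (fun j => ρ (a + 1 + j)) := by
      rw [← List.map_take, List.take_range, min_eq_left (by omega)]
    have h2 : ((List.range (b - a)).map (fun j => ρ (a + 1 + j)))[j]'(by rw [hwlen]; omega) =
        ρ (a + 1 + j) := by
      rw [List.getElem_map, List.getElem_range]
    simp only [h1, h2] at hc
    rw [runS_stackAt A ρ a j, show a + 1 + j = (a + j) + 1 by omega] at hc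
    exact hAC (a + j) c hc


end Stmt11Aux

/-- if Y is closed under cyclic permutations and both Y and ¬Y
are closed under concatenation, then every arena is Y-unambiguous. -/
theorem stmt11 {U : Type} (Y : Set (List U)) (h1 : ClosedCyc Y)
    (h2 : ClosedConcat Y) (h3 : ClosedConcat Yᶜ) (A : Arena U) :
    A.Unambiguous Y := by
  classical
  intro π _ hboth
  obtain ⟨hY, hYc⟩ := hboth
  obtain ⟨k, hk⟩ : ∃ k, A.ACObj Y (A.shift π k) := hY
  obtain ⟨l, hl⟩ : ∃ l, A.ACObj Yᶜ (A.shift π l) := hYc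
  have hk' : ∀ n c, A.cycleAt (A.shift π k) n = some c → A.cycLabels c ∈ Y := hk
  have hl' : ∀ n c, A.cycleAt (A.shift π l) n = some c → A.cycLabels c ∈ Yᶜ := hl
  have hrotY : ∀ x y : List U, x ++ y ∈ Y → y ++ x ∈ Y := by
    intro x
    induction x with
    | nil => intro y h; simpa using h
    | cons a t ih =>
        intro y h
        have h4 : (t ++ y) ++ [a] ∈ Y := h1 a (t ++ y) (by simpa using h)
        have h5 : t ++ (y ++ [a]) ∈ Y := by rwa [List.append_assoc] at h4
        have h6 := ih (y ++ [a]) h5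
        rwa [List.append_assoc] at h6
  have hrotYc : ∀ x y : List U, x ++ y ∈ Yᶜ → y ++ x ∈ Yᶜ :=
    fun x y h hy => h (hrotY y x hy)
  haveI : Finite {s : List A.V // s.Nodup} := Stmt11Aux.finite_nodup A
  have key : ∀ m n : ℕ, m < n → A.stackAt (A.shift π k) (m + l) = A.stackAt (A.shift π k) (n + l) →
      A.stackAt (A.shift π l) (m + k) = A.stackAt (A.shift π l) (n + k) → False := by
    intro m n hmn hs₁ hs₂
    have W1 := Stmt11Aux.windowY A Y h2 hrotY (A.shift π k) hk' (m+l) (n+l) (by omega) hs₁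
    have W2 := Stmt11Aux.windowY A Yᶜ h3 hrotYc (A.shift π l) hl' (m+k) (n+k) (by omega) hs₂
    simp only [Arena.shift] at W1 W2
    rw [show (n+l)-(m+l) = n-m by omega] at W1
    rw [show (n+k)-(m+k) = n-m by omega] at W2
    have eword : ((List.range (n-m)).map fun j => π (m+l+1+j+k)) =
        ((List.range (n-m)).map fun j => π (m+k+1+j+l)) := by
      apply List.map_congr_left
      intro a _
      congr 1
      omega
    have evert : π (m+l+k) = π (m+k+l) := by congr 1; omega
    rw [eword, evert] at W1
    exact W2 W1
  obtain ⟨m, n, hmn, hfeq⟩ := Finite.exists_ne_map_eq_of_infinite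
    (fun t : ℕ =>
      ((⟨A.stackAt (A.shift π k) (t + l), Stmt11Aux.nodup_stackAt A _ _⟩ : {s : List A.V // s.Nodup}),
       (⟨A.stackAt (A.shift π l) (t + k), Stmt11Aux.nodup_stackAt A _ _⟩ : {s : List A.V // s.Nodup})))
  have h1' := congrArg (fun p => (Prod.fst p).val) hfeq
  have h2' := congrArg (fun p => (Prod.snd p).val) hfeq
  simp only at h1' h2'
  rcases Ne.lt_or_gt hmn with h | h
  · exact key m n h h1' h2'
  · exact key n m h h1'.symm h2'.symm
end
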